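/- arXiv:1807.03475 — 6 statements merged into one kernel-verified Lean document; each statement's English description precedes it below -/
import Mathlib

section
/- Let V : ℝⁿ → ℝ be a differentiable nonnegative function and let b > 0 and r > 0 satisfy b·V(x) ≤ ‖∇V(x)‖² for every x ∈ ℝⁿ with V(x) < r. Let x : [0,∞) → ℝⁿ be differentiable with V(x(0)) < r, and suppose that for every t ≥ 0 the velocity satisfies ⟨∇V(x(t)), ẋ(t)⟩ = −‖∇V(x(t))‖² (i.e., ẋ decomposes as a vector annihilated by ∇V minus the gradient ∇V(x)). Then V(x(t)) ≤ V(x(0))·e^{−bt} for all t ≥ 0; in particular the sublevel set {V < r} is positively invariant along this trajectory, i.e., V(x(t)) < r for all t ≥ 0. -/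
open scoped RealInnerProductSpace

noncomputable section

/-- Transversal stabilization estimate (Theorem 1).  If `V : ℝⁿ → ℝ` is a
differentiable nonnegative function with `b·V(x) ≤ ‖∇V(x)‖²` on the sublevel set
`{V < r}`, and a differentiable trajectory `x(t)` starting in that sublevel set
satisfies `⟨∇V(x(t)), ẋ(t)⟩ = −‖∇V(x(t))‖²` for all `t ≥ 0`, then
`V(x(t)) ≤ V(x(0))·e^{−bt}` and in particular `V(x(t)) < r` for all `t ≥ 0`. -/
theorem sublevel_invariant_exp_decay
    (n : ℕ) (V : EuclideanSpace ℝ (Fin n) → ℝ)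
    (hVdiff : Differentiable ℝ V) (hVnonneg : ∀ x, 0 ≤ V x)
    (b r : ℝ) (hb : 0 < b) (hr : 0 < r)
    (hgrad : ∀ x, V x < r → b * V x ≤ ‖gradient V x‖ ^ 2)
    (x : ℝ → EuclideanSpace ℝ (Fin n)) (x' : ℝ → EuclideanSpace ℝ (Fin n))
    (hx : ∀ t, 0 ≤ t → HasDerivAt x (x' t) t)
    (hvel : ∀ t, 0 ≤ t →
      ⟪gradient V (x t), x' t⟫ = -‖gradient V (x t)‖ ^ 2)
    (h0 : V (x 0) < r) :
    ∀ t, 0 ≤ t → V (x t) ≤ V (x 0) * Real.exp (-b * t) ∧ V (x t) < r := by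
  set g : ℝ → ℝ := fun t => V (x t) with hgdef
  have hg : ∀ t, 0 ≤ t → HasDerivAt g (⟪gradient V (x t), x' t⟫) t := by
    intro t ht
    have h1 : HasFDerivAt V (InnerProductSpace.toDual ℝ _ (gradient V (x t))) (x t) :=
      ((hVdiff (x t)).hasGradientAt).hasFDerivAt
    have := h1.comp_hasDerivAt t (hx t ht)
    simpa [hgdef, Function.comp_def] using this
  set h : ℝ → ℝ := fun t => g t * Real.exp (b * t) with hhdef
  have hh : ∀ t, 0 ≤ t →
      HasDerivAt h ((⟪gradient V (x t), x' t⟫ + b * g t) * Real.exp (b * t)) t := by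
    intro t ht
    have he : HasDerivAt (fun t => Real.exp (b * t)) (b * Real.exp (b * t)) t := by
      simpa [mul_comm, Function.comp_def] using (Real.hasDerivAt_exp (b * t)).comp t
        ((hasDerivAt_id t).const_mul b)
    have := (hg t ht).mul he
    refine this.congr_deriv ?_
    ring
  have key : ∀ T, 0 ≤ T → (∀ s ∈ Set.Ico (0:ℝ) T, g s < r) → h T ≤ h 0 := by
    intro T hT hlt
    rcases eq_or_lt_of_le hT with rfl | hT'
    · exact le_rfl
    have hanti : AntitoneOn h (Set.Icc 0 T) := by
      apply antitoneOn_of_deriv_nonpos (convex_Icc 0 T)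
      · intro s hs
        exact ((hh s hs.1).continuousAt).continuousWithinAt
      · intro s hs
        rw [interior_Icc] at hs
        exact (hh s hs.1.le).differentiableAt.differentiableWithinAt
      · intro s hs
        rw [interior_Icc] at hs
        rw [(hh s hs.1.le).deriv]
        have hglt : g s < r := hlt s ⟨hs.1.le, hs.2⟩
        have hb' : b * g s ≤ ‖gradient V (x s)‖ ^ 2 := hgrad (x s) hglt
        have hv := hvel s hs.1.le
        apply mul_nonpos_of_nonpos_of_nonneg
        · rw [hv]; linarith
        · positivity
    exact hanti (Set.left_mem_Icc.2 hT) (Set.right_mem_Icc.2 hT) hT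
  have bound : ∀ T, 0 ≤ T → (∀ s ∈ Set.Ico (0:ℝ) T, g s < r) →
      g T ≤ g 0 * Real.exp (-b * T) := by
    intro T hT hlt
    have hk := key T hT hlt
    have hh0 : h 0 = g 0 := by simp [hhdef]
    have hhT : h T = g T * Real.exp (b * T) := rfl
    rw [hh0, hhT] at hk
    have hep : (0:ℝ) < Real.exp (b * T) := Real.exp_pos _
    have : g T ≤ g 0 / Real.exp (b * T) := (le_div_iff₀ hep).2 hk
    rwa [neg_mul, Real.exp_neg, ← div_eq_mul_inv]
  -- invariance: g stays below r for all t ≥ 0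
  have inv : ∀ t, 0 ≤ t → g t < r := by
    by_contra hcon
    push_neg at hcon
    obtain ⟨t₀, ht₀, hrt₀⟩ := hcon
    set S : Set ℝ := {t | 0 ≤ t ∧ r ≤ g t} with hSdef
    have hSne : S.Nonempty := ⟨t₀, ht₀, hrt₀⟩
    have hSbdd : BddBelow S := ⟨0, fun s hs => hs.1⟩
    set t₁ := sInf S with ht₁def
    have ht₁0 : 0 ≤ t₁ := le_csInf hSne fun s hs => hs.1
    -- g t₁ ≥ r by continuity
    have hrt₁ : r ≤ g t₁ := by
      obtain ⟨u, hu_mono, hu_tendsto, hu_mem⟩ :=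
        exists_seq_tendsto_sInf hSne hSbdd
      have hgc : ContinuousAt g t₁ := (hg t₁ ht₁0).continuousAt
      have : Filter.Tendsto (g ∘ u) Filter.atTop (nhds (g t₁)) :=
        (hgc.tendsto).comp hu_tendsto
      exact ge_of_tendsto this (Filter.Eventually.of_forall fun n => (hu_mem n).2)
    have hlt : ∀ s ∈ Set.Ico (0:ℝ) t₁, g s < r := by
      intro s hs
      by_contra hge
      push_neg at hge
      exact absurd (csInf_le hSbdd ⟨hs.1, hge⟩) (not_le.2 hs.2)
    have hbd := bound t₁ ht₁0 hlt
    have hexp : Real.exp (-b * t₁) ≤ 1 := by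
      rw [Real.exp_le_one_iff]
      nlinarith
    have : g t₁ < r := by
      calc g t₁ ≤ g 0 * Real.exp (-b * t₁) := hbd
        _ ≤ g 0 * 1 := by
            exact mul_le_mul_of_nonneg_left hexp (hVnonneg (x 0))
        _ < r := by simpa using h0
    linarith
  intro t ht
  refine ⟨bound t ht fun s hs => inv s hs.1, inv t ht⟩

end
end

section
/- Let F : ℝⁿ → ℝ^{n−m} be continuously differentiable, let K be an (n−m)×(n−m) positive definite symmetric matrix, and define Ṽ(x) = F(x)ᵀ K F(x), so that ∇Ṽ(x) = 2·DF(x)ᵀ K F(x). Let S ⊆ ℝⁿ and c > 0 be such that for every x ∈ S the smallest singular value of the Jacobian DF(x) is at least c. Set b = 4c²·λ_min(K)² / λ_max(K) and A = √(λ_max(K)/λ_min(K)). If x : [0,∞) → ℝⁿ is a differentiable curve with x(t) ∈ S for all t ≥ 0 and ⟨∇Ṽ(x(t)), ẋ(t)⟩ = −‖∇Ṽ(x(t))‖² for all t ≥ 0, then ‖F(x(t))‖ ≤ A·‖F(x(0))‖·e^{−bt/2} for all t ≥ 0. -/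
open scoped RealInnerProductSpace

noncomputable section

lemma aux_inner_K (m' : ℕ) (K : Matrix (Fin m') (Fin m') ℝ) (hK : K.IsHermitian)
    (v : EuclideanSpace ℝ (Fin m')) :
    ⟪v, Matrix.toEuclideanLin K v⟫ =
      ∑ i, hK.eigenvalues i * ⟪hK.eigenvectorBasis i, v⟫ ^ 2 := by
  have hsum := hK.eigenvectorBasis.sum_inner_mul_inner v (Matrix.toEuclideanLin K v)
  rw [← hsum]
  congr 1
  ext i
  have h1 : ⟪hK.eigenvectorBasis i, Matrix.toEuclideanLin K v⟫ =
      hK.eigenvalues i * ⟪hK.eigenvectorBasis i, v⟫ := by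
    have hsymm := (Matrix.isHermitian_iff_isSymmetric.mp hK)
    have := hsymm (hK.eigenvectorBasis i) v
    rw [← this]
    have hmv : Matrix.toEuclideanLin K (hK.eigenvectorBasis i) =
        hK.eigenvalues i • hK.eigenvectorBasis i := by
      apply (WithLp.equiv 2 (Fin m' → ℝ)).injective
      simp [Matrix.toEuclideanLin_apply]
      exact hK.mulVec_eigenvectorBasis i
    rw [hmv, inner_smul_left]
    simp [real_inner_comm]
  rw [h1, real_inner_comm v]; ring

lemma aux_normsq (m' : ℕ) (K : Matrix (Fin m') (Fin m') ℝ) (hK : K.IsHermitian)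
    (v : EuclideanSpace ℝ (Fin m')) :
    ‖v‖ ^ 2 = ∑ i, ⟪hK.eigenvectorBasis i, v⟫ ^ 2 := by
  have hsum := hK.eigenvectorBasis.sum_inner_mul_inner v v
  rw [real_inner_self_eq_norm_sq] at hsum
  rw [← hsum]
  congr 1; ext i; rw [real_inner_comm v]; ring

lemma aux_lower (m' : ℕ) (K : Matrix (Fin m') (Fin m') ℝ) (hK : K.IsHermitian)
    (lmin : ℝ) (hlmin : ∀ i, lmin ≤ hK.eigenvalues i) (v : EuclideanSpace ℝ (Fin m')) :
    lmin * ‖v‖ ^ 2 ≤ ⟪v, Matrix.toEuclideanLin K v⟫ := by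
  rw [aux_inner_K m' K hK, aux_normsq m' K hK, Finset.mul_sum]
  exact Finset.sum_le_sum fun i _ => mul_le_mul_of_nonneg_right (hlmin i) (sq_nonneg _)

lemma aux_upper (m' : ℕ) (K : Matrix (Fin m') (Fin m') ℝ) (hK : K.IsHermitian)
    (lmax : ℝ) (hlmax : ∀ i, hK.eigenvalues i ≤ lmax) (v : EuclideanSpace ℝ (Fin m')) :
    ⟪v, Matrix.toEuclideanLin K v⟫ ≤ lmax * ‖v‖ ^ 2 := by
  rw [aux_inner_K m' K hK, aux_normsq m' K hK, Finset.mul_sum]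
  exact Finset.sum_le_sum fun i _ => mul_le_mul_of_nonneg_right (hlmax i) (sq_nonneg _)

lemma aux_norm_mulVec (m' : ℕ) (K : Matrix (Fin m') (Fin m') ℝ) (hK : K.IsHermitian)
    (lmin : ℝ) (hlmin0 : 0 ≤ lmin) (hlmin : ∀ i, lmin ≤ hK.eigenvalues i)
    (v : EuclideanSpace ℝ (Fin m')) :
    lmin * ‖v‖ ≤ ‖Matrix.toEuclideanLin K v‖ := by
  rcases eq_or_ne v 0 with rfl | hv
  · simp
  have h1 := aux_lower m' K hK lmin hlmin v
  have h2 : ⟪v, Matrix.toEuclideanLin K v⟫ ≤ ‖v‖ * ‖Matrix.toEuclideanLin K v‖ :=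
    real_inner_le_norm _ _
  have hvpos : 0 < ‖v‖ := norm_pos_iff.mpr hv
  nlinarith [h1.trans h2]

/-- Corollary 1: exponential convergence to the zero level set `M = F⁻¹(0)`.
With `Ṽ(x) = F(x)ᵀ K F(x)` (so `∇Ṽ(x) = 2 DF(x)ᵀ K F(x)`), if the smallest
singular value of `DF(x)` is at least `c` on `S` (encoded as
`c‖w‖ ≤ ‖DF(x)ᵀ w‖` for all `w`), and a differentiable curve `x(t)` stays
in `S` and satisfies `⟨∇Ṽ(x(t)), ẋ(t)⟩ = −‖∇Ṽ(x(t))‖²`, then with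
`b = 4c²λ_min(K)²/λ_max(K)` and `A = √(λ_max(K)/λ_min(K))` one has
`‖F(x(t))‖ ≤ A‖F(x(0))‖e^{−bt/2}` for all `t ≥ 0`. -/
theorem exp_convergence_to_level_set
    (n m' : ℕ) (F : EuclideanSpace ℝ (Fin n) → EuclideanSpace ℝ (Fin m'))
    (hF : ContDiff ℝ 1 F)
    (K : Matrix (Fin m') (Fin m') ℝ) (hK : K.PosDef)
    (Vt : EuclideanSpace ℝ (Fin n) → ℝ)
    (hVt : ∀ x, Vt x = dotProduct (F x) (K.mulVec (F x)))
    (hgradVt : ∀ x, gradient Vt x =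
      (2:ℝ) • (ContinuousLinearMap.adjoint (fderiv ℝ F x))
        ((WithLp.equiv 2 (Fin m' → ℝ)).symm (K.mulVec (F x))))
    (S : Set (EuclideanSpace ℝ (Fin n))) (c : ℝ) (hc : 0 < c)
    (hsing : ∀ x ∈ S, ∀ w : EuclideanSpace ℝ (Fin m'),
      c * ‖w‖ ≤ ‖(ContinuousLinearMap.adjoint (fderiv ℝ F x)) w‖)
    (lmin lmax : ℝ)
    (hlmin : IsLeast (Set.range hK.1.eigenvalues) lmin)
    (hlmax : IsGreatest (Set.range hK.1.eigenvalues) lmax)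
    (x : ℝ → EuclideanSpace ℝ (Fin n)) (x' : ℝ → EuclideanSpace ℝ (Fin n))
    (hx : ∀ t, 0 ≤ t → HasDerivAt x (x' t) t)
    (hxS : ∀ t, 0 ≤ t → x t ∈ S)
    (hvel : ∀ t, 0 ≤ t →
      ⟪gradient Vt (x t), x' t⟫ = -‖gradient Vt (x t)‖ ^ 2) :
    ∀ t, 0 ≤ t →
      ‖F (x t)‖ ≤ Real.sqrt (lmax / lmin) * ‖F (x 0)‖ *
        Real.exp (-(4 * c ^ 2 * lmin ^ 2 / lmax) / 2 * t) := by
  -- basic positivity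
  obtain ⟨imin, himin⟩ := hlmin.1
  obtain ⟨imax, himax⟩ := hlmax.1
  have hlmin_pos : 0 < lmin := himin ▸ hK.eigenvalues_pos imin
  have hlmax_pos : 0 < lmax := himax ▸ hK.eigenvalues_pos imax
  have hlminle : ∀ i, lmin ≤ hK.1.eigenvalues i := fun i => hlmin.2 ⟨i, rfl⟩
  have hlmaxge : ∀ i, hK.1.eigenvalues i ≤ lmax := fun i => hlmax.2 ⟨i, rfl⟩
  set b : ℝ := 4 * c ^ 2 * lmin ^ 2 / lmax with hb
  have hbpos : 0 < b := by positivity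
  -- rewrite Vt via inner product
  have hVt' : ∀ y, Vt y = ⟪F y, Matrix.toEuclideanLin K (F y)⟫ := by
    intro y
    rw [hVt]
    simp only [Matrix.toEuclideanLin_apply, PiLp.inner_apply, RCLike.inner_apply,
      dotProduct, mul_comm, map_sum, conj_trivial]
  -- differentiability of Vt
  have hVtdiff : ∀ y, DifferentiableAt ℝ Vt y := by
    intro y
    have h1 : DifferentiableAt ℝ (fun y => ⟪F y, Matrix.toEuclideanLin K (F y)⟫) y := by
      have hFd : DifferentiableAt ℝ F y := hF.differentiable one_ne_zero y
      have hKC : ∀ v, Matrix.toEuclideanLin K v = Matrix.toEuclideanCLM (𝕜 := ℝ) K v := by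
        intro v
        rw [← Matrix.coe_toEuclideanCLM_eq_toEuclideanLin]
        rfl
      have hGd : DifferentiableAt ℝ (fun y => Matrix.toEuclideanCLM (𝕜 := ℝ) K (F y)) y :=
        (Matrix.toEuclideanCLM (𝕜 := ℝ) K).differentiableAt.comp y hFd
      simp only [hKC]
      exact hFd.inner ℝ hGd
    exact h1.congr_of_eventuallyEq (Filter.Eventually.of_forall fun z => hVt' z)
  -- bounds for Vt
  have hVt_lb : ∀ y, lmin * ‖F y‖ ^ 2 ≤ Vt y := by
    intro y; rw [hVt' y]; exact aux_lower m' K hK.1 lmin hlminle (F y)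
  have hVt_ub : ∀ y, Vt y ≤ lmax * ‖F y‖ ^ 2 := by
    intro y; rw [hVt' y]; exact aux_upper m' K hK.1 lmax hlmaxge (F y)
  -- derivative of φ t = Vt (x t)
  set φ : ℝ → ℝ := fun t => Vt (x t) with hφdef
  have hφ : ∀ t, 0 ≤ t → HasDerivAt φ (-‖gradient Vt (x t)‖ ^ 2) t := by
    intro t ht
    have hgr : HasGradientAt Vt (gradient Vt (x t)) (x t) := (hVtdiff (x t)).hasGradientAt
    have hfd : HasFDerivAt Vt (InnerProductSpace.toDual ℝ _ (gradient Vt (x t))) (x t) :=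
      hasGradientAt_iff_hasFDerivAt.mp hgr
    have := hfd.comp_hasDerivAt t (hx t ht)
    rw [InnerProductSpace.toDual_apply_apply, hvel t ht] at this; exact this
  -- gradient norm lower bound
  have hgradlb : ∀ t, 0 ≤ t → 2 * c * lmin * ‖F (x t)‖ ≤ ‖gradient Vt (x t)‖ := by
    intro t ht
    rw [hgradVt (x t)]
    have hw : (WithLp.equiv 2 (Fin m' → ℝ)).symm (K.mulVec (F (x t))) =
        Matrix.toEuclideanLin K (F (x t)) := by
      rw [Matrix.toEuclideanLin_apply]
      rfl
    rw [hw, norm_smul]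
    have h1 : c * ‖Matrix.toEuclideanLin K (F (x t))‖ ≤
        ‖(ContinuousLinearMap.adjoint (fderiv ℝ F (x t)))
          (Matrix.toEuclideanLin K (F (x t)))‖ :=
      hsing (x t) (hxS t ht) _
    have h2 : lmin * ‖F (x t)‖ ≤ ‖Matrix.toEuclideanLin K (F (x t))‖ :=
      aux_norm_mulVec m' K hK.1 lmin hlmin_pos.le hlminle (F (x t))
    have : ‖(2:ℝ)‖ = 2 := by norm_num
    rw [this]
    nlinarith
  -- the Lyapunov inequality: φ' ≤ -b φ
  have hkey : ∀ t, 0 ≤ t → -‖gradient Vt (x t)‖ ^ 2 + b * φ t ≤ 0 := by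
    intro t ht
    have h1 := hgradlb t ht
    have h2 : φ t ≤ lmax * ‖F (x t)‖ ^ 2 := hVt_ub (x t)
    have h3 : b * φ t ≤ b * (lmax * ‖F (x t)‖ ^ 2) := by
      exact mul_le_mul_of_nonneg_left h2 hbpos.le
    have h4 : b * lmax = 4 * c ^ 2 * lmin ^ 2 := by
      rw [hb, div_mul_cancel₀ _ hlmax_pos.ne']
    have h5 : (2 * c * lmin * ‖F (x t)‖) ^ 2 ≤ ‖gradient Vt (x t)‖ ^ 2 := by
      apply sq_le_sq' _ h1
      exact (neg_nonpos.mpr (norm_nonneg _)).trans (by positivity)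
    nlinarith [norm_nonneg (F (x t))]
  -- Gronwall via monotonicity of g t = φ t * exp (b t)
  set g : ℝ → ℝ := fun t => φ t * Real.exp (b * t) with hgdef
  have hg : ∀ t, 0 ≤ t → HasDerivAt g
      ((-‖gradient Vt (x t)‖ ^ 2 + b * φ t) * Real.exp (b * t)) t := by
    intro t ht
    have hexp : HasDerivAt (fun s => Real.exp (b * s)) (Real.exp (b * t) * b) t := by
      simpa using ((hasDerivAt_id t).const_mul b).exp
    have := (hφ t ht).fun_mul hexp
    exact this.congr_deriv (by ring)
  have hanti : AntitoneOn g (Set.Ici (0:ℝ)) := by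
    apply antitoneOn_of_deriv_nonpos (convex_Ici 0)
    · intro t ht
      exact ((hg t ht).continuousAt).continuousWithinAt
    · intro t ht
      rw [interior_Ici] at ht
      exact ((hg t (le_of_lt ht)).differentiableAt).differentiableWithinAt
    · intro t ht
      rw [interior_Ici] at ht
      rw [(hg t (le_of_lt ht)).deriv]
      have := hkey t (le_of_lt ht)
      have hexp : (0:ℝ) < Real.exp (b * t) := Real.exp_pos _
      nlinarith
  -- conclude
  intro t ht
  have hgle : g t ≤ g 0 := hanti Set.self_mem_Ici ht ht
  have hφt : φ t * Real.exp (b * t) ≤ φ 0 := by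
    simpa [hgdef] using hgle
  have hFt2 : ‖F (x t)‖ ^ 2 ≤ (lmax / lmin) * ‖F (x 0)‖ ^ 2 * Real.exp (-b * t) := by
    have h1 : lmin * ‖F (x t)‖ ^ 2 ≤ φ t := hVt_lb (x t)
    have h2 : φ 0 ≤ lmax * ‖F (x 0)‖ ^ 2 := hVt_ub (x 0)
    have hexp : (0:ℝ) < Real.exp (b * t) := Real.exp_pos _
    have hexp' : Real.exp (-b * t) = (Real.exp (b * t))⁻¹ := by
      rw [← Real.exp_neg]; ring_nf
    rw [hexp']
    have hpos : (0:ℝ) < lmin * Real.exp (b * t) := by positivity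
    have key : ‖F (x t)‖ ^ 2 * (lmin * Real.exp (b * t)) ≤ lmax * ‖F (x 0)‖ ^ 2 := by
      have h3 : lmin * ‖F (x t)‖ ^ 2 * Real.exp (b * t) ≤ φ t * Real.exp (b * t) :=
        mul_le_mul_of_nonneg_right h1 hexp.le
      nlinarith
    calc ‖F (x t)‖ ^ 2
        = ‖F (x t)‖ ^ 2 * (lmin * Real.exp (b * t)) / (lmin * Real.exp (b * t)) := by
          field_simp
      _ ≤ lmax * ‖F (x 0)‖ ^ 2 / (lmin * Real.exp (b * t)) :=
          by gcongr
      _ = lmax / lmin * ‖F (x 0)‖ ^ 2 * (Real.exp (b * t))⁻¹ := by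
          field_simp
  -- take square roots
  have hRHS : (Real.sqrt (lmax / lmin) * ‖F (x 0)‖ * Real.exp (-b / 2 * t)) ^ 2 =
      (lmax / lmin) * ‖F (x 0)‖ ^ 2 * Real.exp (-b * t) := by
    have h1 : Real.sqrt (lmax / lmin) ^ 2 = lmax / lmin :=
      Real.sq_sqrt (by positivity)
    have h2 : Real.exp (-b / 2 * t) ^ 2 = Real.exp (-b * t) := by
      rw [sq, ← Real.exp_add]; ring_nf
    rw [mul_pow, mul_pow, h1, h2]
  have hfin : ‖F (x t)‖ ^ 2 ≤
      (Real.sqrt (lmax / lmin) * ‖F (x 0)‖ * Real.exp (-b / 2 * t)) ^ 2 := by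
    rw [hRHS]; exact hFt2
  have hrhs_nonneg : 0 ≤ Real.sqrt (lmax / lmin) * ‖F (x 0)‖ * Real.exp (-b / 2 * t) := by
    positivity
  calc ‖F (x t)‖ = Real.sqrt (‖F (x t)‖ ^ 2) := (Real.sqrt_sq (norm_nonneg _)).symm
    _ ≤ Real.sqrt ((Real.sqrt (lmax / lmin) * ‖F (x 0)‖ * Real.exp (-b / 2 * t)) ^ 2) :=
        Real.sqrt_le_sqrt hfin
    _ = Real.sqrt (lmax / lmin) * ‖F (x 0)‖ * Real.exp (-b / 2 * t) :=
        Real.sqrt_sq hrhs_nonneg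

end
end

section
/- Let k_e > 0. There exist r > 0 and b > 0 with the following property: for every differentiable curve R : [0,∞) → ℝ^{3×3} and every curve Ω : [0,∞) → ℝ³ such that Ṙ(t) = R(t)·Ω̂(t) − k_e·R(t)(R(t)ᵀR(t) − I) for all t ≥ 0, if (k_e/4)·‖R(0)ᵀR(0) − I‖² < r then (k_e/4)·‖R(t)ᵀR(t) − I‖² < r for all t ≥ 0 and ‖R(t)ᵀR(t) − I‖ ≤ ‖R(0)ᵀR(0) − I‖·e^{−bt/2} for all t ≥ 0; in particular the trajectory converges exponentially to the set {R : RᵀR = I}. -/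
open Matrix

attribute [local instance] Matrix.frobeniusNormedAddCommGroup Matrix.frobeniusNormedSpace

noncomputable section

abbrev Mat3 := Matrix (Fin 3) (Fin 3) ℝ

/-- Frobenius inner product. -/
def finner (A B : Mat3) : ℝ := (Aᵀ * B).trace

/-- Euclidean norm on ℝ³. -/
def enorm3 (v : Fin 3 → ℝ) : ℝ := Real.sqrt (∑ i, v i ^ 2)

/-- The hat map. -/
def hat (v : Fin 3 → ℝ) : Mat3 :=
  !![0, -v 2, v 1; v 2, 0, -v 0; -v 1, v 0, 0]

/-- The vee map, inverse of the hat map on skew-symmetric matrices. -/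
def vee (A : Mat3) : Fin 3 → ℝ := ![A 2 1, A 0 2, A 1 0]

/-- The cross product on ℝ³. -/
def cross (u v : Fin 3 → ℝ) : Fin 3 → ℝ :=
  ![u 1 * v 2 - u 2 * v 1, u 2 * v 0 - u 0 * v 2, u 0 * v 1 - u 1 * v 0]

/-- Symmetrization operator. -/
def symPart (A : Mat3) : Mat3 := (2⁻¹ : ℝ) • (A + Aᵀ)

/-- Skew-symmetrization operator. -/
def skewPart (A : Mat3) : Mat3 := (2⁻¹ : ℝ) • (A - Aᵀ)

/-- `SO(3)`: rotation matrices. -/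
def SO3 : Set Mat3 := {R | Rᵀ * R = 1 ∧ 0 < R.det}

/-- The matrix commutator. -/
def mcomm (A B : Mat3) : Mat3 := A * B - B * A

-- helper lemmas
lemma finner_eq_sum (A B : Mat3) : finner A B = ∑ i, ∑ j, A i j * B i j := by
  simp [finner, Matrix.trace, Matrix.diag, Matrix.mul_apply, Matrix.transpose_apply]
  rw [Finset.sum_comm]

lemma norm_eq_sqrt (A : Mat3) : ‖A‖ = Real.sqrt (∑ i, ∑ j, (A i j)^2) := by
  rw [frobenius_norm_def, Real.sqrt_eq_rpow]
  congr 1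
  simp [Real.rpow_two, Real.norm_eq_abs, sq_abs]

lemma norm_sq_eq (A : Mat3) : ‖A‖^2 = finner A A := by
  rw [norm_eq_sqrt, Real.sq_sqrt (by positivity), finner_eq_sum]
  simp [sq]

lemma hat_skew (v : Fin 3 → ℝ) : (hat v)ᵀ = -(hat v) := by
  ext i j
  fin_cases i <;> fin_cases j <;> simp [hat]

lemma trace_sym_skew (A B : Mat3) (hA : Aᵀ = A) (hB : Bᵀ = -B) : (A * B).trace = 0 := by
  have h : (A * B).trace = -(A * B).trace := by
    conv_lhs => rw [← Matrix.trace_transpose, Matrix.transpose_mul, hA, hB, Matrix.neg_mul,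
      Matrix.trace_neg, Matrix.trace_mul_comm]
  linarith

lemma finner_le (A B : Mat3) : finner A B ≤ ‖A‖ * ‖B‖ := by
  rw [finner_eq_sum, norm_eq_sqrt, norm_eq_sqrt]
  have := Real.sum_mul_le_sqrt_mul_sqrt (Finset.univ ×ˢ Finset.univ)
    (fun p : Fin 3 × Fin 3 => A p.1 p.2) (fun p => B p.1 p.2)
  simpa [Fintype.sum_prod_type] using this

lemma neg_finner_le (A B : Mat3) : -finner A B ≤ ‖A‖ * ‖B‖ := by
  have h1 : finner A (-B) = -finner A B := by
    simp [finner, Matrix.mul_neg]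
  have := finner_le A (-B)
  rwa [h1, norm_neg] at this

lemma key_alg (ke : ℝ) (A : Mat3) (w : Fin 3 → ℝ) :
    finner (Aᵀ*A - 1) ((A * hat w - ke • (A * (Aᵀ*A - 1)))ᵀ*A
        + Aᵀ*(A * hat w - ke • (A * (Aᵀ*A - 1))))
      = -2*ke*(finner (Aᵀ*A - 1) ((Aᵀ*A - 1)*(Aᵀ*A - 1)) + finner (Aᵀ*A - 1) (Aᵀ*A - 1)) := by
  set E : Mat3 := Aᵀ*A - 1 with hEdef
  set M : Mat3 := A * hat w - ke • (A * E) with hMdef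
  have hE : Eᵀ = E := by
    simp [hEdef, Matrix.transpose_sub, Matrix.transpose_mul]
  have h1 : finner E (Mᵀ*A) = finner E (Aᵀ*M) := by
    unfold finner
    rw [hE]
    conv_lhs => rw [← Matrix.trace_transpose]
    simp only [Matrix.transpose_mul, Matrix.transpose_transpose, hE]
    rw [← Matrix.mul_assoc, Matrix.trace_mul_comm (Aᵀ*M) E, ← Matrix.mul_assoc]
  have hAA : Aᵀ*A = E + 1 := by simp [hEdef]
  have h2 : Aᵀ*M = E*hat w + hat w - ke•(E*E) - ke•E := by
    rw [hMdef, Matrix.mul_sub, Matrix.mul_smul, ← Matrix.mul_assoc, ← Matrix.mul_assoc, hAA]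
    rw [Matrix.add_mul, Matrix.add_mul, Matrix.one_mul, Matrix.one_mul, smul_add]
    abel
  have hsym2 : (E*E)ᵀ = E*E := by rw [Matrix.transpose_mul, hE]
  have z1 : finner E (hat w) = 0 := by
    unfold finner; rw [hE]; exact trace_sym_skew E (hat w) hE (hat_skew w)
  have z2 : finner E (E*hat w) = 0 := by
    unfold finner; rw [hE, ← Matrix.mul_assoc]
    exact trace_sym_skew (E*E) (hat w) hsym2 (hat_skew w)
  have lin : ∀ X Y : Mat3, finner E (X + Y) = finner E X + finner E Y := by
    intro X Y; unfold finner; rw [Matrix.mul_add, Matrix.trace_add]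
  have lins : ∀ (r : ℝ) (X : Mat3), finner E (r • X) = r * finner E X := by
    intro r X; unfold finner; rw [Matrix.mul_smul, Matrix.trace_smul, smul_eq_mul]
  have linsub : ∀ X Y : Mat3, finner E (X - Y) = finner E X - finner E Y := by
    intro X Y; unfold finner; rw [Matrix.mul_sub, Matrix.trace_sub]
  rw [lin, h1, h2]
  rw [linsub, linsub, lin, lins, lins, z1, z2]
  ring

def entryCLM (i j : Fin 3) : Mat3 →L[ℝ] ℝ :=
  LinearMap.toContinuousLinearMap
    { toFun := fun A : Mat3 => A i j
      map_add' := fun _ _ => rfl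
      map_smul' := fun _ _ => rfl }

lemma hasDerivAt_entry {R : ℝ → Mat3} {M : Mat3} {t : ℝ} (hR : HasDerivAt R M t)
    (i j : Fin 3) : HasDerivAt (fun s => R s i j) (M i j) t :=
  (entryCLM i j).hasFDerivAt.comp_hasDerivAt t hR

lemma hasDerivAt_W {R : ℝ → Mat3} {M : Mat3} {t : ℝ} (hR : HasDerivAt R M t) :
    HasDerivAt (fun s => finner ((R s)ᵀ * R s - 1) ((R s)ᵀ * R s - 1))
      (2 * finner ((R t)ᵀ * R t - 1) (Mᵀ * R t + (R t)ᵀ * M)) t := by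
  have hE : ∀ i j, HasDerivAt (fun s => ((R s)ᵀ * R s - 1) i j)
      ((Mᵀ * R t + (R t)ᵀ * M) i j) t := by
    intro i j
    have hfun : (fun s => ((R s)ᵀ * R s - 1) i j)
        = fun s => (∑ k, R s k i * R s k j) - (1 : Mat3) i j := by
      funext s
      simp [Matrix.sub_apply, Matrix.mul_apply, Matrix.transpose_apply]
    rw [hfun]
    have hval : (Mᵀ * R t + (R t)ᵀ * M) i j
        = ∑ k, (M k i * R t k j + R t k i * M k j) := by
      simp [Matrix.add_apply, Matrix.mul_apply, Matrix.transpose_apply,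
        Finset.sum_add_distrib]
    rw [hval]
    exact (HasDerivAt.fun_sum (fun k _ =>
      (hasDerivAt_entry hR k i).mul (hasDerivAt_entry hR k j))).sub_const _
  have hfun2 : (fun s => finner ((R s)ᵀ * R s - 1) ((R s)ᵀ * R s - 1))
      = fun s => ∑ i, ∑ j, (((R s)ᵀ * R s - 1) i j)^2 := by
    funext s; rw [finner_eq_sum]; simp [sq]
  rw [hfun2]
  have hsum : HasDerivAt (fun s => ∑ i, ∑ j, (((R s)ᵀ * R s - 1) i j)^2)
      (∑ i, ∑ j, 2 * ((R t)ᵀ * R t - 1) i j * (Mᵀ * R t + (R t)ᵀ * M) i j) t := by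
    refine HasDerivAt.fun_sum fun i _ => HasDerivAt.fun_sum fun j _ => ?_
    simpa [mul_comm, mul_assoc] using ((hE i j).fun_pow 2)
  convert hsum using 1
  rw [finner_eq_sum, Finset.mul_sum]
  congr 1; funext i
  rw [Finset.mul_sum]
  congr 1; funext j
  ring

section MainArg

variable {ke : ℝ} {R : ℝ → Mat3} {Ω : ℝ → Fin 3 → ℝ}

/-- `W` along the trajectory. -/
def Wf (R : ℝ → Mat3) (s : ℝ) : ℝ := finner ((R s)ᵀ * R s - 1) ((R s)ᵀ * R s - 1)

lemma Wf_nonneg (R : ℝ → Mat3) (s : ℝ) : 0 ≤ Wf R s := by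
  have := norm_sq_eq ((R s)ᵀ * R s - 1)
  unfold Wf; rw [← this]; positivity

lemma Wf_hasDeriv (hke : 0 < ke)
    (hR : ∀ t, 0 ≤ t → HasDerivAt R
      (R t * hat (Ω t) - ke • (R t * ((R t)ᵀ * R t - 1))) t)
    {s : ℝ} (hs : 0 ≤ s) :
    HasDerivAt (Wf R)
      (-4*ke*(finner ((R s)ᵀ * R s - 1) (((R s)ᵀ * R s - 1)*((R s)ᵀ * R s - 1)) + Wf R s)) s := by
  have h := hasDerivAt_W (hR s hs)
  have heq : 2 * finner ((R s)ᵀ * R s - 1)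
      ((R s * hat (Ω s) - ke • (R s * ((R s)ᵀ * R s - 1)))ᵀ * R s
        + (R s)ᵀ * (R s * hat (Ω s) - ke • (R s * ((R s)ᵀ * R s - 1))))
      = -4*ke*(finner ((R s)ᵀ * R s - 1) (((R s)ᵀ * R s - 1)*((R s)ᵀ * R s - 1)) + Wf R s) := by
    rw [key_alg ke (R s) (Ω s)]; unfold Wf; ring
  rw [← heq]
  exact h

/-- exponential decay estimate, given smallness on the open interval. -/
lemma Wf_decay (hke : 0 < ke)
    (hR : ∀ t, 0 ≤ t → HasDerivAt R
      (R t * hat (Ω t) - ke • (R t * ((R t)ᵀ * R t - 1))) t)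
    {τ : ℝ} (hτ : 0 ≤ τ) (hsm : ∀ s ∈ Set.Ioo (0:ℝ) τ, Wf R s ≤ 1/16) :
    Wf R τ ≤ Wf R 0 * Real.exp (-(2*ke*τ)) := by
  set g : ℝ → ℝ := fun s => Wf R s * Real.exp (2*ke*s) with hg
  have hgd : ∀ s, 0 ≤ s → HasDerivAt g
      ((-4*ke*(finner ((R s)ᵀ * R s - 1) (((R s)ᵀ * R s - 1)*((R s)ᵀ * R s - 1)) + Wf R s))
        * Real.exp (2*ke*s) + Wf R s * (Real.exp (2*ke*s) * (2*ke))) s := by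
    intro s hs
    have hexp : HasDerivAt (fun u : ℝ => Real.exp (2*ke*u)) (Real.exp (2*ke*s) * (2*ke)) s := by
      simpa using (((hasDerivAt_id s).const_mul (2*ke)).exp)
    exact (Wf_hasDeriv hke hR hs).mul hexp
  have hanti : AntitoneOn g (Set.Icc 0 τ) := by
    apply antitoneOn_of_deriv_nonpos (convex_Icc 0 τ)
    · intro s hs
      exact ((hgd s hs.1).continuousAt).continuousWithinAt
    · intro s hs
      rw [interior_Icc] at hs
      exact ((hgd s hs.1.le).differentiableAt).differentiableWithinAt
    · intro s hs
      rw [interior_Icc] at hs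
      rw [(hgd s hs.1.le).deriv]
      set E : Mat3 := (R s)ᵀ * R s - 1 with hE
      have hW16 : Wf R s ≤ 1/16 := hsm s hs
      have hWs : ‖E‖^2 = Wf R s := by rw [norm_sq_eq]; rfl
      have hEle : ‖E‖ ≤ 1/4 := by
        nlinarith [norm_nonneg E, sq_nonneg (‖E‖ - 1/4)]
      have hF : -finner E (E*E) ≤ ‖E‖ * ‖E*E‖ := neg_finner_le E (E*E)
      have hEE : ‖E*E‖ ≤ ‖E‖ * ‖E‖ := frobenius_norm_mul E E
      have hFge : -finner E (E*E) ≤ (1/4) * ‖E‖^2 := by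
        nlinarith [norm_nonneg E, norm_nonneg (E*E)]
      have hexp_pos : (0:ℝ) < Real.exp (2*ke*s) := Real.exp_pos _
      have hWnn : 0 ≤ Wf R s := Wf_nonneg R s
      nlinarith [mul_pos hke hexp_pos]
  have h0m : (0:ℝ) ∈ Set.Icc (0:ℝ) τ := ⟨le_refl _, hτ⟩
  have hτm : τ ∈ Set.Icc (0:ℝ) τ := ⟨hτ, le_refl _⟩
  have := hanti h0m hτm hτ
  rw [hg] at this
  simp only [mul_zero, Real.exp_zero, mul_one] at this
  rw [Real.exp_neg, ← div_eq_mul_inv, le_div_iff₀ (Real.exp_pos _)]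
  exact this

lemma Wf_inv (hke : 0 < ke)
    (hR : ∀ t, 0 ≤ t → HasDerivAt R
      (R t * hat (Ω t) - ke • (R t * ((R t)ᵀ * R t - 1))) t)
    (hW0 : Wf R 0 < 1/16) : ∀ s, 0 ≤ s → Wf R s < 1/16 := by
  by_contra hc
  push_neg at hc
  obtain ⟨s₀, hs₀, h16⟩ := hc
  set T : Set ℝ := {s | 0 ≤ s ∧ 1/16 ≤ Wf R s} with hT
  have hne : T.Nonempty := ⟨s₀, hs₀, h16⟩
  have hbdd : BddBelow T := ⟨0, fun x hx => hx.1⟩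
  set t₁ : ℝ := sInf T with ht₁def
  have ht₁0 : 0 ≤ t₁ := le_csInf hne fun x hx => hx.1
  have hlow : ∀ s, 0 ≤ s → s < t₁ → Wf R s < 1/16 := by
    intro s hs hst
    by_contra h
    push_neg at h
    exact absurd (csInf_le hbdd ⟨hs, h⟩) (not_le.2 hst)
  have hcont : ContinuousAt (Wf R) t₁ := (Wf_hasDeriv hke hR ht₁0).continuousAt
  have hWt₁ : 1/16 ≤ Wf R t₁ := by
    by_contra hcc
    push_neg at hcc
    have hev : ∀ᶠ s in nhds t₁, Wf R s < 1/16 := hcont.eventually_lt_const hcc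
    obtain ⟨ε, hε, hball⟩ := Metric.eventually_nhds_iff.mp hev
    obtain ⟨x, hxT, hxlt⟩ := (csInf_lt_iff hbdd hne).mp (by linarith : sInf T < t₁ + ε)
    have hx1 : t₁ ≤ x := csInf_le hbdd hxT
    have : Wf R x < 1/16 := hball (by rw [Real.dist_eq, abs_lt]; constructor <;> linarith)
    exact absurd hxT.2 (not_le.2 this)
  have hdecay := Wf_decay hke hR ht₁0 (fun s hs => (hlow s hs.1.le hs.2).le)
  have hWnn : 0 ≤ Wf R 0 := Wf_nonneg R 0
  have hexple : Real.exp (-(2*ke*t₁)) ≤ 1 := by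
    rw [Real.exp_le_one_iff]
    nlinarith
  nlinarith

end MainArg


/-- Theorem 2: for the transversally stabilized rigid body attitude dynamics
`Ṙ = RΩ̂ − k_e R(RᵀR − I)`, the sublevel set `{Ṽ < r}` of
`Ṽ(R) = (k_e/4)‖RᵀR − I‖²` is positively invariant (for suitable `r > 0`) and
trajectories converge exponentially to `{R : RᵀR = I}`. -/
theorem SO3_exponentially_attractive (ke : ℝ) (hke : 0 < ke) :
    ∃ r > (0:ℝ), ∃ b > (0:ℝ),
      ∀ (R : ℝ → Mat3) (Ω : ℝ → Fin 3 → ℝ),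
        (∀ t, 0 ≤ t → HasDerivAt R
          (R t * hat (Ω t) - ke • (R t * ((R t)ᵀ * R t - 1))) t) →
        ke / 4 * ‖(R 0)ᵀ * R 0 - 1‖ ^ 2 < r →
        ∀ t, 0 ≤ t →
          ke / 4 * ‖(R t)ᵀ * R t - 1‖ ^ 2 < r ∧
          ‖(R t)ᵀ * R t - 1‖ ≤ ‖(R 0)ᵀ * R 0 - 1‖ * Real.exp (-(b / 2) * t) := by
  refine ⟨ke/64, by positivity, 2*ke, by positivity, ?_⟩
  intro R Ω hR h0 t ht
  have hWs : ∀ s, ‖(R s)ᵀ * R s - 1‖^2 = Wf R s := fun s => norm_sq_eq _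
  have hW0 : Wf R 0 < 1/16 := by
    rw [← hWs 0]
    nlinarith [sq_nonneg ‖(R 0)ᵀ * R 0 - 1‖, hWs 0, h0]
  have hinv := Wf_inv hke hR hW0
  have hWt : Wf R t < 1/16 := hinv t ht
  constructor
  · rw [hWs t]
    nlinarith
  · have hdecay := Wf_decay hke hR ht (fun s hs => (hinv s hs.1.le).le)
    have key : ‖(R t)ᵀ * R t - 1‖^2 ≤ (‖(R 0)ᵀ * R 0 - 1‖ * Real.exp (-(2*ke/2) * t))^2 := by
      rw [mul_pow, hWs t, hWs 0]
      have : (Real.exp (-(2*ke/2) * t))^2 = Real.exp (-(2*ke*t)) := by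
        rw [← Real.exp_nat_mul]
        congr 1
        ring
      rw [this]
      exact hdecay
    calc ‖(R t)ᵀ * R t - 1‖ = Real.sqrt (‖(R t)ᵀ * R t - 1‖^2) := by
          rw [Real.sqrt_sq (norm_nonneg _)]
      _ ≤ Real.sqrt ((‖(R 0)ᵀ * R 0 - 1‖ * Real.exp (-(2*ke/2) * t))^2) :=
          Real.sqrt_le_sqrt key
      _ = ‖(R 0)ᵀ * R 0 - 1‖ * Real.exp (-(2*ke/2) * t) := by
          rw [Real.sqrt_sq (by positivity)]

end
end

section
/- Let k_e ∈ ℝ, let Ω₀ : [0,∞) → ℝ³ and ΔΩ : [0,∞) → ℝ³ be curves, and let R₀ : [0,∞) → ℝ^{3×3} be differentiable with R₀(t)ᵀR₀(t) = I and Ṙ₀(t) = R₀(t)·Ω̂₀(t) for all t ≥ 0. Suppose ΔR : [0,∞) → ℝ^{3×3} is differentiable and satisfies ΔṘ(t) = ΔR(t)·Ω̂₀(t) + R₀(t)·(ΔΩ(t))^∧ − 2k_e·R₀(t)·Sym(R₀(t)ᵀΔR(t)) for all t ≥ 0. Define Z(t) = R₀(t)ᵀ·ΔR(t), Z_s = Sym(Z),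 Z_k = Skew(Z). Then for all t ≥ 0: Ż_s(t) = [Z_s(t), Ω̂₀(t)] − 2k_e·Z_s(t), and Ż_k(t) = [Z_k(t), Ω̂₀(t)] + (ΔΩ(t))^∧, the latter being equivalent to d/dt (Z_k^∨)(t) = Z_k^∨(t) × Ω₀(t) + ΔΩ(t). -/
open Matrix

attribute [local instance] Matrix.frobeniusNormedAddCommGroup Matrix.frobeniusNormedSpace

noncomputable section

attribute [local instance] Matrix.frobeniusNormedRing Matrix.frobeniusNormedAlgebra

/-- Transpose as a continuous linear map. -/
def Tclm : Mat3 →L[ℝ] Mat3 :=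
  LinearMap.toContinuousLinearMap
    { toFun := Matrix.transpose
      map_add' := fun A B => Matrix.transpose_add A B
      map_smul' := fun c A => Matrix.transpose_smul c A }

@[simp] lemma Tclm_apply (A : Mat3) : Tclm A = Aᵀ := rfl

/-- vee as a continuous linear map. -/
def Vclm : Mat3 →L[ℝ] (Fin 3 → ℝ) :=
  LinearMap.toContinuousLinearMap
    { toFun := vee
      map_add' := fun A B => by funext i; fin_cases i <;> simp [vee]
      map_smul' := fun c A => by funext i; fin_cases i <;> simp [vee] }

@[simp] lemma Vclm_apply (A : Mat3) : Vclm A = vee A := rfl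

set_option maxHeartbeats 1000000 in
lemma symPart_key (A : Mat3) (w u : Fin 3 → ℝ) (c : ℝ) :
    symPart (mcomm A (hat w) + hat u - c • symPart A)
      = mcomm (symPart A) (hat w) - c • symPart A := by
  ext i j
  simp only [symPart, mcomm, hat, Matrix.smul_apply, Matrix.add_apply, Matrix.sub_apply,
    Matrix.transpose_apply, Matrix.mul_apply, Fin.sum_univ_three, smul_eq_mul]
  fin_cases i <;> fin_cases j <;>
    simp [Matrix.cons_val_zero, Matrix.cons_val_one, Matrix.head_cons] <;> ring

set_option maxHeartbeats 1000000 in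
lemma skewPart_key (A : Mat3) (w u : Fin 3 → ℝ) (c : ℝ) :
    skewPart (mcomm A (hat w) + hat u - c • symPart A)
      = mcomm (skewPart A) (hat w) + hat u := by
  ext i j
  simp only [symPart, skewPart, mcomm, hat, Matrix.smul_apply, Matrix.add_apply, Matrix.sub_apply,
    Matrix.transpose_apply, Matrix.mul_apply, Fin.sum_univ_three, smul_eq_mul]
  fin_cases i <;> fin_cases j <;>
    simp [Matrix.cons_val_zero, Matrix.cons_val_one, Matrix.head_cons] <;> ring

set_option maxHeartbeats 1000000 in
lemma vee_key (A : Mat3) (w u : Fin 3 → ℝ) :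
    vee (mcomm (skewPart A) (hat w) + hat u) = cross (vee (skewPart A)) w + u := by
  funext i
  simp only [vee, cross, skewPart, mcomm, hat, Pi.add_apply, Matrix.smul_apply, Matrix.add_apply,
    Matrix.sub_apply, Matrix.transpose_apply, Matrix.mul_apply, Fin.sum_univ_three, smul_eq_mul]
  fin_cases i <;>
    simp [Matrix.cons_val_zero, Matrix.cons_val_one, Matrix.head_cons] <;> ring

lemma hat_transpose (v : Fin 3 → ℝ) : (hat v)ᵀ = -hat v := by
  ext i j; fin_cases i <;> fin_cases j <;> simp [hat]

lemma Zderiv_eq (ke : ℝ) (R D : Mat3) (w u : Fin 3 → ℝ) (horth : Rᵀ * R = 1) :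
    mcomm (Rᵀ * D) (hat w) + hat u - (2 * ke) • symPart (Rᵀ * D) =
      (R * hat w)ᵀ * D + Rᵀ * (D * hat w + R * hat u - (2 * ke) • (R * symPart (Rᵀ * D))) := by
  simp only [mcomm, Matrix.transpose_mul, hat_transpose, Matrix.mul_add, Matrix.mul_sub,
    Matrix.mul_smul, Matrix.neg_mul, Matrix.mul_neg]
  rw [← Matrix.mul_assoc Rᵀ R (hat u), horth, Matrix.one_mul, ← Matrix.mul_assoc (hat w) Rᵀ D,
    ← Matrix.mul_assoc Rᵀ D (hat w), ← Matrix.mul_assoc Rᵀ R (symPart (Rᵀ * D)), horth,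
    Matrix.one_mul]
  abel

/-- Lemma 3: decoupling of the linearized stabilized rigid body dynamics into
symmetric and skew-symmetric parts.  With `Z = R₀ᵀΔR`, `Z_s = Sym Z`,
`Z_k = Skew Z`, one gets `Ż_s = [Z_s, Ω̂₀] − 2k_e Z_s`,
`Ż_k = [Z_k, Ω̂₀] + ΔΩ̂`, equivalently `(Z_k^∨)' = Z_k^∨ × Ω₀ + ΔΩ`. -/
theorem linearized_dynamics_decoupling (ke : ℝ)
    (Ω₀ ΔΩ : ℝ → Fin 3 → ℝ) (R₀ ΔR : ℝ → Mat3)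
    (hR₀orth : ∀ t, 0 ≤ t → (R₀ t)ᵀ * R₀ t = 1)
    (hR₀ : ∀ t, 0 ≤ t → HasDerivAt R₀ (R₀ t * hat (Ω₀ t)) t)
    (hΔR : ∀ t, 0 ≤ t → HasDerivAt ΔR
      (ΔR t * hat (Ω₀ t) + R₀ t * hat (ΔΩ t)
        - (2 * ke) • (R₀ t * symPart ((R₀ t)ᵀ * ΔR t))) t)
    (Z Zs Zk : ℝ → Mat3)
    (hZ : ∀ t, Z t = (R₀ t)ᵀ * ΔR t)
    (hZs : ∀ t, Zs t = symPart (Z t))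
    (hZk : ∀ t, Zk t = skewPart (Z t)) :
    ∀ t, 0 ≤ t →
      HasDerivAt Zs (mcomm (Zs t) (hat (Ω₀ t)) - (2 * ke) • Zs t) t ∧
      HasDerivAt Zk (mcomm (Zk t) (hat (Ω₀ t)) + hat (ΔΩ t)) t ∧
      HasDerivAt (fun s => vee (Zk s)) (cross (vee (Zk t)) (Ω₀ t) + ΔΩ t) t := by
  intro t ht
  have hZfun : Z = fun s => (R₀ s)ᵀ * ΔR s := funext hZ
  -- derivative of Z
  have hDZ : HasDerivAt Z
      (mcomm (Z t) (hat (Ω₀ t)) + hat (ΔΩ t) - (2 * ke) • symPart (Z t)) t := by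
    have h1 : HasDerivAt (fun s => (R₀ s)ᵀ) (R₀ t * hat (Ω₀ t))ᵀ t :=
      Tclm.hasFDerivAt.comp_hasDerivAt t (hR₀ t ht)
    have h2 := h1.mul (hΔR t ht)
    have h2' : HasDerivAt Z
        ((R₀ t * hat (Ω₀ t))ᵀ * ΔR t + (R₀ t)ᵀ * (ΔR t * hat (Ω₀ t) + R₀ t * hat (ΔΩ t)
          - (2 * ke) • (R₀ t * symPart ((R₀ t)ᵀ * ΔR t)))) t := by
      rw [hZfun]; exact h2
    have heq := Zderiv_eq ke (R₀ t) (ΔR t) (Ω₀ t) (ΔΩ t) (hR₀orth t ht)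
    rw [hZ t]
    rw [heq]
    exact h2'
  -- derivative of Zs
  have hDZs : HasDerivAt Zs (mcomm (Zs t) (hat (Ω₀ t)) - (2 * ke) • Zs t) t := by
    have hZsfun : Zs = fun s => (2⁻¹ : ℝ) • (Z s + Tclm (Z s)) := by
      funext s; rw [hZs s]; rfl
    have h3 : HasDerivAt (fun s => (2⁻¹ : ℝ) • (Z s + Tclm (Z s)))
        ((2⁻¹ : ℝ) • ((mcomm (Z t) (hat (Ω₀ t)) + hat (ΔΩ t) - (2 * ke) • symPart (Z t))
          + (mcomm (Z t) (hat (Ω₀ t)) + hat (ΔΩ t) - (2 * ke) • symPart (Z t))ᵀ)) t :=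
      by have h := (hDZ.add (Tclm.hasFDerivAt.comp_hasDerivAt t hDZ)).const_smul (2⁻¹ : ℝ); exact h
    have h3' : HasDerivAt Zs
        (symPart (mcomm (Z t) (hat (Ω₀ t)) + hat (ΔΩ t) - (2 * ke) • symPart (Z t))) t := by
      rw [hZsfun]; exact h3
    rw [hZs t]
    rw [← symPart_key (Z t) (Ω₀ t) (ΔΩ t) (2 * ke)]
    exact h3'
  -- derivative of Zk
  have hDZk : HasDerivAt Zk (mcomm (Zk t) (hat (Ω₀ t)) + hat (ΔΩ t)) t := by
    have hZkfun : Zk = fun s => (2⁻¹ : ℝ) • (Z s - Tclm (Z s)) := by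
      funext s; rw [hZk s]; rfl
    have h4 : HasDerivAt (fun s => (2⁻¹ : ℝ) • (Z s - Tclm (Z s)))
        ((2⁻¹ : ℝ) • ((mcomm (Z t) (hat (Ω₀ t)) + hat (ΔΩ t) - (2 * ke) • symPart (Z t))
          - (mcomm (Z t) (hat (Ω₀ t)) + hat (ΔΩ t) - (2 * ke) • symPart (Z t))ᵀ)) t :=
      by have h := (hDZ.sub (Tclm.hasFDerivAt.comp_hasDerivAt t hDZ)).const_smul (2⁻¹ : ℝ); exact h
    have h4' : HasDerivAt Zk
        (skewPart (mcomm (Z t) (hat (Ω₀ t)) + hat (ΔΩ t) - (2 * ke) • symPart (Z t))) t := by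
      rw [hZkfun]; exact h4
    rw [hZk t]
    rw [← skewPart_key (Z t) (Ω₀ t) (ΔΩ t) (2 * ke)]
    exact h4'
  refine ⟨hDZs, hDZk, ?_⟩
  have h5 : HasDerivAt (fun s => Vclm (Zk s))
      (Vclm (mcomm (Zk t) (hat (Ω₀ t)) + hat (ΔΩ t))) t :=
    Vclm.hasFDerivAt.comp_hasDerivAt t hDZk
  simp only [Vclm_apply] at h5
  rw [hZk t]
  rw [← vee_key (Z t) (Ω₀ t) (ΔΩ t)]
  rw [hZk t] at h5
  exact h5

end
end

section
/- Let k_e > 0 and let Ω₀ : [0,∞) → ℝ³ be differentiable and bounded, with u₀ = Ω̇₀. Let K_P, K_D ∈ ℝ^{3×3} be such that the 6×6 block matrix [[0, I],[−K_P, −K_D]] is Hurwitz. Then there exist constants C > 0 and λ > 0 such that every solution (Z_s, z, ω) : [0,∞) → Sym(ℝ^{3×3}) × ℝ³ × ℝ³ of the closed-loop system Ż_s = [Z_s, Ω̂₀(t)] − 2k_e Z_s, ż = z × Ω₀(t) + ω, ω̇ = −K_P z − K_D (z × Ω₀(t) + ω) − (z × Ω₀(t) + ω) × Ω₀(t) −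 z × u₀(t), satisfies ‖Z_s(t)‖ + ‖z(t)‖ + ‖ω(t)‖ ≤ C·e^{−λt}·(‖Z_s(0)‖ + ‖z(0)‖ + ‖ω(0)‖) for all t ≥ 0. -/
open Matrix

attribute [local instance] Matrix.frobeniusNormedAddCommGroup Matrix.frobeniusNormedSpace

noncomputable section

/-- A real square matrix is Hurwitz if every complex eigenvalue (root of its
characteristic polynomial over ℂ) has negative real part. -/
def IsHurwitzMat {n : Type*} [Fintype n] [DecidableEq n] (M : Matrix n n ℝ) : Prop :=
  ∀ μ : ℂ, (M.map (algebraMap ℝ ℂ)).charpoly.eval μ = 0 → μ.re < 0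

/-- A real polynomial is Hurwitz if all of its complex roots have negative real part. -/
def IsHurwitzPoly (p : Polynomial ℝ) : Prop :=
  ∀ μ : ℂ, (p.map (algebraMap ℝ ℂ)).eval μ = 0 → μ.re < 0

lemma enorm3_nonneg (v : Fin 3 → ℝ) : 0 ≤ enorm3 v := Real.sqrt_nonneg _

lemma abs_le_enorm3 (v : Fin 3 → ℝ) (i : Fin 3) : |v i| ≤ enorm3 v := by
  rw [enorm3, ← Real.sqrt_sq_eq_abs]
  apply Real.sqrt_le_sqrt
  fin_cases i <;> simp [Fin.sum_univ_three] <;> nlinarith [sq_nonneg (v 0), sq_nonneg (v 1), sq_nonneg (v 2)]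

lemma enorm3_le_sum (v : Fin 3 → ℝ) : enorm3 v ≤ ∑ i, |v i| := by
  have h : ∑ i, v i ^ 2 ≤ (∑ i, |v i|) ^ 2 := by
    simp [Fin.sum_univ_three]
    nlinarith [abs_nonneg (v 0), abs_nonneg (v 1), abs_nonneg (v 2), sq_abs (v 0), sq_abs (v 1), sq_abs (v 2), abs_mul_abs_self (v 0)]
  calc enorm3 v ≤ Real.sqrt ((∑ i, |v i|) ^ 2) := Real.sqrt_le_sqrt h
  _ = ∑ i, |v i| := Real.sqrt_sq (by positivity)

/-- One-step variation of constants bound. -/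
lemma ode_step (μ : ℂ) (γ B S : ℝ) (hγ : μ.re ≤ -γ) (hB : 0 ≤ B) (hS : 0 ≤ S) (m : ℕ)
    (y f : ℝ → ℂ) (hy : ∀ t, 0 ≤ t → HasDerivAt y (μ * y t + f t) t)
    (hfc : ContinuousOn f (Set.Ici 0))
    (hf : ∀ s, 0 ≤ s → ‖f s‖ ≤ B * (1+s)^m * Real.exp (-γ * s) * S) :
    ∀ t, 0 ≤ t → ‖y t‖ ≤
      (‖y 0‖ + B * S) * (1+t)^(m+1) * Real.exp (-γ * t) := by
  intro t ht
  set g : ℝ → ℂ := fun s : ℝ => Complex.exp (-(μ * s)) * y s with hg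
  have hgd : ∀ s : ℝ, 0 ≤ s → HasDerivAt g (Complex.exp (-(μ * s)) * f s) s := by
    intro s hs
    have h1 : HasDerivAt (fun s : ℝ => Complex.exp (-(μ * s))) (-μ * Complex.exp (-(μ * (s:ℂ)))) s := by
      have h0 : HasDerivAt (fun s : ℝ => -(μ * s)) (-μ) s := by
        exact (((Complex.ofRealCLM.hasDerivAt (x := s)).const_mul μ).neg).congr_deriv (by simp)
      simpa [mul_comm] using h0.cexp
    have := h1.mul (hy s hs)
    refine this.congr_deriv ?_
    ring
  have hFTC : g t - g 0 = ∫ s in (0:ℝ)..t, Complex.exp (-(μ * s)) * f s := by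
    refine (intervalIntegral.integral_eq_sub_of_hasDerivAt
      (f := g) (f' := fun s : ℝ => Complex.exp (-(μ * s)) * f s)
      (fun s hs => hgd s (by rw [Set.uIcc_of_le ht] at hs; exact hs.1)) ?_).symm
    apply ContinuousOn.intervalIntegrable
    apply ContinuousOn.mul
    · exact (Complex.continuous_exp.comp (by continuity)).continuousOn
    · apply hfc.mono
      rw [Set.uIcc_of_le ht]; exact fun x hx => hx.1
  have hbound : ‖g t - g 0‖ ≤
      (Real.exp (-μ.re * t) * (B * (1+t)^m * Real.exp (-γ * t) * S)) * t := by
    rw [hFTC]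
    have := intervalIntegral.norm_integral_le_of_norm_le_const
      (C := Real.exp (-μ.re * t) * (B * (1+t)^m * Real.exp (-γ * t) * S))
      (f := fun s : ℝ => Complex.exp (-(μ * s)) * f s) (a := (0:ℝ)) (b := t) ?_
    · simpa [abs_of_nonneg ht] using this
    · intro s hs
      rw [Set.uIoc_of_le ht] at hs
      have hs0 : 0 ≤ s := le_of_lt hs.1
      have hst : s ≤ t := hs.2
      have h1 : ‖Complex.exp (-(μ * s)) * f s‖ = Real.exp (-μ.re * s) * ‖f s‖ := by
        simp [Complex.norm_exp]
      rw [h1]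
      have h2 : Real.exp (-μ.re * s) * ‖f s‖ ≤
          Real.exp (-μ.re * s) * (B * (1+s)^m * Real.exp (-γ * s) * S) := by
        apply mul_le_mul_of_nonneg_left (hf s hs0) (Real.exp_nonneg _)
      refine h2.trans ?_
      have e1 : Real.exp (-μ.re * s) * Real.exp (-γ * s) ≤ Real.exp (-μ.re * t) * Real.exp (-γ * t) := by
        rw [← Real.exp_add, ← Real.exp_add]
        apply Real.exp_le_exp.mpr
        nlinarith [hγ]
      have e2 : (1+s)^m ≤ (1+t)^m := by
        apply pow_le_pow_left₀ (by linarith) (by linarith)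
      have hBSm : 0 ≤ B * (1+s)^m := by positivity
      nlinarith [Real.exp_nonneg (-μ.re * s), Real.exp_nonneg (-γ * s), Real.exp_nonneg (-μ.re * t), Real.exp_nonneg (-γ * t), mul_nonneg (mul_nonneg hB (pow_nonneg (by linarith : (0:ℝ) ≤ 1+s) m)) hS,
        mul_le_mul e2 e1 (mul_nonneg (Real.exp_nonneg _) (Real.exp_nonneg _)) (pow_nonneg (by linarith : (0:ℝ) ≤ 1+t) m), mul_nonneg hB hS]
  have hyg : y t = Complex.exp (μ * t) * g t := by
    rw [hg]; rw [← mul_assoc, ← Complex.exp_add]; simp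
  have hg0 : g 0 = y 0 := by simp [hg]
  have habs : ‖y t‖ ≤ Real.exp (μ.re * t) * (‖y 0‖ + (Real.exp (-μ.re * t) * (B * (1+t)^m * Real.exp (-γ * t) * S)) * t) := by
    rw [hyg]
    rw [norm_mul, Complex.norm_exp]
    simp only [Complex.mul_re, Complex.ofReal_re, Complex.ofReal_im, mul_zero, sub_zero]
    apply mul_le_mul_of_nonneg_left _ (Real.exp_nonneg _)
    calc ‖g t‖ ≤ ‖g 0‖ + ‖g t - g 0‖ := by
          have := norm_add_le (g 0) (g t - g 0); simpa using this
    _ ≤ _ := by rw [hg0] at hbound; rw [hg0]; linarith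
  have hexp : Real.exp (μ.re * t) * Real.exp (-μ.re * t) = 1 := by
    rw [← Real.exp_add]; ring_nf; exact Real.exp_zero
  have hle : Real.exp (μ.re * t) ≤ Real.exp (-γ * t) := by
    apply Real.exp_le_exp.mpr; nlinarith
  refine habs.trans ?_
  have expand : Real.exp (μ.re * t) * (‖y 0‖ + (Real.exp (-μ.re * t) * (B * (1+t)^m * Real.exp (-γ * t) * S)) * t)
      = Real.exp (μ.re * t) * ‖y 0‖ + (B * (1+t)^m * S * t) * Real.exp (-γ * t) := by
    linear_combination (B * (1+t)^m * Real.exp (-γ * t) * S * t) * hexp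
  rw [expand]
  have h1t : (1:ℝ) ≤ (1+t)^(m+1) := one_le_pow₀ (by linarith)
  have h2t : t * (1+t)^m ≤ (1+t)^(m+1) := by
    rw [pow_succ, mul_comm ((1+t)^m) (1+t)]
    apply mul_le_mul_of_nonneg_right (by linarith) (pow_nonneg (by linarith) m)
  have hy0 : 0 ≤ ‖y 0‖ := norm_nonneg _
  have c1 : Real.exp (μ.re * t) * ‖y 0‖ ≤
      (1+t)^(m+1) * Real.exp (-γ * t) * ‖y 0‖ := by
    have d1 := mul_le_mul_of_nonneg_right hle hy0
    have d2 := mul_le_mul_of_nonneg_right h1t (mul_nonneg (Real.exp_nonneg (-γ * t)) hy0)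
    nlinarith
  have c2 : (B * (1+t)^m * S * t) * Real.exp (-γ * t) ≤
      B * S * (1+t)^(m+1) * Real.exp (-γ * t) := by
    have d3 : B * (1+t)^m * S * t ≤ B * S * (1+t)^(m+1) := by
      nlinarith [mul_nonneg hB hS, mul_le_mul_of_nonneg_left h2t (mul_nonneg hB hS)]
    exact mul_le_mul_of_nonneg_right d3 (Real.exp_nonneg _)
  nlinarith [c1, c2]

open Polynomial in
/-- Exponential decay for scalar linear ODEs with Hurwitz characteristic polynomial. -/
lemma poly_ode_decay (γ : ℝ) :
    ∀ n : ℕ, ∀ p : Polynomial ℂ, p.Monic → p.natDegree = n →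
    (∀ μ : ℂ, p.eval μ = 0 → μ.re ≤ -γ) →
    ∃ C, 0 ≤ C ∧ ∀ F : ℕ → ℝ → ℂ,
      (∀ j, ∀ t : ℝ, 0 ≤ t → HasDerivAt (F j) (F (j+1) t) t) →
      (∀ t : ℝ, 0 ≤ t → ∑ k ∈ Finset.range (n+1), p.coeff k * F k t = 0) →
      ∀ t : ℝ, 0 ≤ t → ‖F 0 t‖ ≤
        C * (1+t)^n * Real.exp (-γ*t) * ∑ j ∈ Finset.range n, ‖F j 0‖ := by
  intro n
  induction n with
  | zero =>
    intro p hmon hdeg _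
    refine ⟨1, zero_le_one, fun F _ hrel t ht => ?_⟩
    have hp1 : p = 1 := hmon.natDegree_eq_zero.mp hdeg
    have := hrel t ht
    simp [hp1] at this
    simp [this]
  | succ n IH =>
    intro p hmon hdeg hroots
    -- p has a root μ
    obtain ⟨μ, hμ⟩ : ∃ μ, p.IsRoot μ := by
      apply Complex.exists_root
      exact Polynomial.natDegree_pos_iff_degree_pos.mp (by omega)
    have hμre : μ.re ≤ -γ := hroots μ hμ
    obtain ⟨q, hq⟩ : (X - C μ) ∣ p := dvd_iff_isRoot.mpr hμ
    have hqmon : q.Monic := (monic_X_sub_C μ).of_mul_monic_left (hq ▸ hmon)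
    have hqdeg : q.natDegree = n := by
      have h1 : p.natDegree = (X - C μ).natDegree + q.natDegree := by
        rw [hq, (monic_X_sub_C μ).natDegree_mul hqmon]
      rw [hdeg, natDegree_X_sub_C] at h1
      omega
    have hqroots : ∀ ν : ℂ, q.eval ν = 0 → ν.re ≤ -γ := by
      intro ν hν
      apply hroots
      rw [hq, eval_mul, hν, mul_zero]
    obtain ⟨Cq, hCq0, hCq⟩ := IH q hqmon hqdeg hqroots
    refine ⟨1 + Cq * n * (1 + ‖μ‖), by positivity, fun F hF hrel t ht => ?_⟩
    set G : ℕ → ℝ → ℂ := fun j t => F (j+1) t - μ * F j t with hGdef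
    have hGder : ∀ j, ∀ t : ℝ, 0 ≤ t → HasDerivAt (G j) (G (j+1) t) t := by
      intro j t ht
      exact (hF (j+1) t ht).sub ((hF j t ht).const_mul μ)
    have hGrel : ∀ t : ℝ, 0 ≤ t → ∑ k ∈ Finset.range (n+1), q.coeff k * G k t = 0 := by
      intro t ht
      have hp := hrel t ht
      have hcoeff : ∀ k, p.coeff k = (X * q).coeff k - μ * q.coeff k := by
        intro k
        rw [hq]
        have : (X - C μ) * q = X * q - C μ * q := by ring
        rw [this, coeff_sub, coeff_C_mul]
      calc ∑ k ∈ Finset.range (n+1), q.coeff k * G k t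
          = (∑ k ∈ Finset.range (n+1), q.coeff k * F (k+1) t)
            - μ * ∑ k ∈ Finset.range (n+1), q.coeff k * F k t := by
            rw [Finset.mul_sum, ← Finset.sum_sub_distrib]
            apply Finset.sum_congr rfl
            intro k _
            simp only [hGdef]
            ring
        _ = ∑ k ∈ Finset.range (n+1+1), p.coeff k * F k t := by
            have hsum : ∑ k ∈ Finset.range (n+1+1), p.coeff k * F k t
                = (∑ k ∈ Finset.range (n+1), q.coeff k * F (k+1) t)
                  - μ * ∑ k ∈ Finset.range (n+1), q.coeff k * F k t := by
              rw [Finset.sum_congr rfl (fun k _ => by rw [hcoeff k])]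
              simp only [sub_mul, Finset.sum_sub_distrib]
              congr 1
              · rw [Finset.sum_range_succ']
                simp [coeff_X_mul, mul_coeff_zero, coeff_X_zero]
              · rw [Finset.mul_sum, Finset.sum_range_succ]
                rw [coeff_eq_zero_of_natDegree_lt (by omega : q.natDegree < n+1)]
                simp [Finset.mul_sum, mul_assoc]
            rw [hsum]
        _ = 0 := hp
    have hGbound := hCq G hGder hGrel
    set S : ℝ := ∑ j ∈ Finset.range (n+1), ‖F j 0‖ with hSdef
    have hS0 : 0 ≤ S := Finset.sum_nonneg fun j _ => norm_nonneg _
    have hFj0 : ∀ j, j < n + 1 → ‖F j 0‖ ≤ S := by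
      intro j hj
      exact Finset.single_le_sum (f := fun j => ‖F j 0‖)
        (fun i _ => norm_nonneg _) (Finset.mem_range.mpr hj)
    have hGS : ∑ j ∈ Finset.range n, ‖G j 0‖ ≤ n * (1 + ‖μ‖) * S := by
      calc ∑ j ∈ Finset.range n, ‖G j 0‖
          ≤ ∑ j ∈ Finset.range n, (1 + ‖μ‖) * S := by
            apply Finset.sum_le_sum
            intro j hj
            have hj' := Finset.mem_range.mp hj
            calc ‖G j 0‖ ≤ ‖F (j+1) 0‖ + ‖μ‖ * ‖F j 0‖ := by
                  simpa [hGdef] using (norm_sub_le (F (j+1) 0) (μ * F j 0)).trans (by simp)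
              _ ≤ S + ‖μ‖ * S := by
                  have h1 := hFj0 (j+1) (by omega)
                  have h2 := hFj0 j (by omega)
                  have := mul_le_mul_of_nonneg_left h2 (norm_nonneg μ)
                  linarith
              _ = (1 + ‖μ‖) * S := by ring
        _ = n * (1 + ‖μ‖) * S := by
            rw [Finset.sum_const, Finset.card_range]
            push_cast
            ring
    -- forcing bound for G 0
    have hG0bd : ∀ s : ℝ, 0 ≤ s → ‖G 0 s‖ ≤
        (Cq * n * (1 + ‖μ‖)) * (1+s)^n * Real.exp (-γ*s) * S := by
      intro s hs
      calc ‖G 0 s‖ ≤ Cq * (1+s)^n * Real.exp (-γ*s) * ∑ j ∈ Finset.range n, ‖G j 0‖ :=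
            hGbound s hs
        _ ≤ Cq * (1+s)^n * Real.exp (-γ*s) * (n * (1 + ‖μ‖) * S) := by
            apply mul_le_mul_of_nonneg_left hGS
            positivity
        _ = (Cq * n * (1 + ‖μ‖)) * (1+s)^n * Real.exp (-γ*s) * S := by ring
    have hF0der : ∀ s : ℝ, 0 ≤ s → HasDerivAt (F 0) (μ * F 0 s + G 0 s) s := by
      intro s hs
      have := hF 0 s hs
      simpa [hGdef] using this
    have hG0cont : ContinuousOn (G 0) (Set.Ici 0) := by
      intro s hs
      exact ((hGder 0 s hs).continuousAt).continuousWithinAt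
    have := ode_step μ γ (Cq * n * (1 + ‖μ‖)) S hμre (by positivity) hS0 n
      (F 0) (G 0) hF0der hG0cont hG0bd t ht
    calc ‖F 0 t‖ ≤ (‖F 0 0‖ + Cq * n * (1 + ‖μ‖) * S) * (1+t)^(n+1) * Real.exp (-γ*t) := this
      _ ≤ ((1 + Cq * n * (1 + ‖μ‖)) * S) * (1+t)^(n+1) * Real.exp (-γ*t) := by
          have h0 := hFj0 0 (by omega)
          have hmul : 0 ≤ Cq * n * (1 + ‖μ‖) := by positivity
          have : ‖F 0 0‖ + Cq * n * (1 + ‖μ‖) * S ≤ (1 + Cq * n * (1 + ‖μ‖)) * S := by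
            nlinarith
          apply mul_le_mul_of_nonneg_right (mul_le_mul_of_nonneg_right this (by positivity)) (Real.exp_nonneg _)
      _ = (1 + Cq * n * (1 + ‖μ‖)) * (1+t)^(n+1) * Real.exp (-γ*t) * S := by ring

lemma poly_le_exp (n : ℕ) (δ : ℝ) (hδ : 0 < δ) :
    ∃ K, 0 < K ∧ ∀ t : ℝ, 0 ≤ t → (1+t)^n ≤ K * Real.exp (δ * t) := by
  refine ⟨(n.factorial / δ^n) * Real.exp δ, by positivity, fun t ht => ?_⟩
  have hx : 0 ≤ δ * (1+t) := by positivity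
  have h1 : (δ*(1+t))^n / n.factorial ≤ Real.exp (δ*(1+t)) := by
    refine le_trans ?_ (Real.sum_le_exp_of_nonneg hx (n+1))
    exact Finset.single_le_sum (f := fun i => (δ*(1+t))^i / i.factorial)
      (fun i _ => by positivity) (Finset.self_mem_range_succ n)
  have h2 : δ^n * (1+t)^n / n.factorial ≤ Real.exp δ * Real.exp (δ * t) := by
    rw [← Real.exp_add]
    calc δ^n * (1+t)^n / n.factorial = (δ*(1+t))^n / n.factorial := by rw [mul_pow]
      _ ≤ Real.exp (δ*(1+t)) := h1
      _ = Real.exp (δ + δ*t) := by ring_nf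
  have hfac : (0:ℝ) < n.factorial := by positivity
  have hδn : (0:ℝ) < δ^n := by positivity
  have h3 := mul_le_mul_of_nonneg_left h2 (le_of_lt (by positivity : (0:ℝ) < (n.factorial : ℝ) / δ^n))
  have h4 : ((n.factorial : ℝ) / δ^n) * (δ^n * (1+t)^n / n.factorial) = (1+t)^n := by
    field_simp
  rw [h4] at h3
  calc (1+t)^n ≤ (n.factorial : ℝ)/δ^n * (Real.exp δ * Real.exp (δ*t)) := h3
    _ = (n.factorial : ℝ)/δ^n * Real.exp δ * Real.exp (δ*t) := by ring

/-- Exponential decay for linear systems with Hurwitz matrix. -/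
lemma linear_system_decay {ι : Type*} [Fintype ι] [DecidableEq ι] [Nonempty ι]
    (A : Matrix ι ι ℝ)
    (hHur : ∀ μ : ℂ, ((A.map (algebraMap ℝ ℂ)).charpoly.eval μ = 0 → μ.re < 0)) :
    ∃ C, 0 < C ∧ ∃ lam, 0 < lam ∧ ∀ x : ℝ → ι → ℝ,
      (∀ t : ℝ, 0 ≤ t → HasDerivAt x (A.mulVec (x t)) t) →
      ∀ t, 0 ≤ t → ∀ i, |x t i| ≤ C * Real.exp (-lam * t) * ∑ k, |x 0 k| := by
  classical
  set p : Polynomial ℂ := (A.map (algebraMap ℝ ℂ)).charpoly with hpdef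
  have hpmon : p.Monic := Matrix.charpoly_monic _
  set np : ℕ := Fintype.card ι with hnp
  have hpdeg : p.natDegree = np := Matrix.charpoly_natDegree_eq_dim _
  have hη : 0 < np := Fintype.card_pos
  -- the roots
  have hdegpos : 0 < p.degree := Polynomial.natDegree_pos_iff_degree_pos.mp (by omega)
  obtain ⟨μ₀, hμ₀⟩ := Complex.exists_root hdegpos
  have hμ₀mem : μ₀ ∈ p.roots.toFinset := by
    rw [Multiset.mem_toFinset, Polynomial.mem_roots']
    exact ⟨hpmon.ne_zero, hμ₀⟩
  have hne : p.roots.toFinset.Nonempty := ⟨μ₀, hμ₀mem⟩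
  set γ : ℝ := p.roots.toFinset.inf' hne (fun μ => -μ.re) with hγdef
  have hγpos : 0 < γ := by
    rw [hγdef, Finset.lt_inf'_iff]
    intro μ hμ
    rw [Multiset.mem_toFinset, Polynomial.mem_roots'] at hμ
    have := hHur μ hμ.2
    linarith
  have hγroots : ∀ μ : ℂ, p.eval μ = 0 → μ.re ≤ -γ := by
    intro μ hμ
    have hmem : μ ∈ p.roots.toFinset := by
      rw [Multiset.mem_toFinset, Polynomial.mem_roots']
      exact ⟨hpmon.ne_zero, hμ⟩
    have := Finset.inf'_le (fun μ : ℂ => -μ.re) hmem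
    rw [← hγdef] at this
    linarith
  obtain ⟨C₁, hC₁0, hC₁⟩ := poly_ode_decay γ np p hpmon hpdeg hγroots
  obtain ⟨K₂, hK₂0, hK₂⟩ := poly_le_exp np (γ/2) (by positivity)
  set K₃ : ℝ := ∑ j ∈ Finset.range np, ∑ i : ι, ∑ k : ι, |(A^j) i k| with hK₃def
  have hK₃0 : 0 ≤ K₃ := by positivity
  refine ⟨C₁ * K₂ * K₃ + 1, by positivity, γ/2, by positivity, fun x hx t ht i => ?_⟩
  set W : ℝ := ∑ k, |x 0 k| with hWdef
  have hW0 : 0 ≤ W := Finset.sum_nonneg fun k _ => abs_nonneg _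
  -- component derivatives
  have hcomp : ∀ (j : ℕ) (i : ι) (t : ℝ), 0 ≤ t →
      HasDerivAt (fun t => ((A^j).mulVec (x t)) i) (((A^(j+1)).mulVec (x t)) i) t := by
    intro j i t ht
    have hxi : ∀ k, HasDerivAt (fun t => x t k) ((A.mulVec (x t)) k) t :=
      hasDerivAt_pi.mp (hx t ht)
    have h1 : HasDerivAt (fun t => ∑ k, (A^j) i k * x t k)
        (∑ k, (A^j) i k * (A.mulVec (x t)) k) t :=
      HasDerivAt.fun_sum (fun k _ => (hxi k).const_mul _)
    have e1 : (fun t => ((A^j).mulVec (x t)) i) = (fun t => ∑ k, (A^j) i k * x t k) := by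
      funext s; simp [Matrix.mulVec, dotProduct]
    have e2 : ((A^(j+1)).mulVec (x t)) i = ∑ k, (A^j) i k * (A.mulVec (x t)) k := by
      rw [pow_succ, ← Matrix.mulVec_mulVec]
      simp [Matrix.mulVec, dotProduct]
    rw [e1, e2]
    exact h1
  set F : ℕ → ℝ → ℂ := fun j t => (((A^j).mulVec (x t)) i : ℂ) with hFdef
  have hFder : ∀ j, ∀ t : ℝ, 0 ≤ t → HasDerivAt (F j) (F (j+1) t) t := by
    intro j t ht
    exact (hcomp j i t ht).ofReal_comp
  have hFrel : ∀ t : ℝ, 0 ≤ t → ∑ k ∈ Finset.range (np+1), p.coeff k * F k t = 0 := by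
    intro t ht
    have key : (∑ k ∈ Finset.range (np+1), A.charpoly.coeff k • A^k) = 0 := by
      have hlt : A.charpoly.natDegree < np + 1 := by
        rw [Matrix.charpoly_natDegree_eq_dim]; omega
      rw [← Polynomial.aeval_eq_sum_range' hlt A]
      exact Matrix.aeval_self_charpoly A
    have hreal : ∑ k ∈ Finset.range (np+1), A.charpoly.coeff k * (((A^k).mulVec (x t)) i) = 0 := by
      have : ∑ k ∈ Finset.range (np+1), A.charpoly.coeff k * (((A^k).mulVec (x t)) i)
          = ((∑ k ∈ Finset.range (np+1), A.charpoly.coeff k • A^k).mulVec (x t)) i := by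
        simp only [Matrix.mulVec, dotProduct, Matrix.sum_apply, Matrix.smul_apply,
          smul_eq_mul, Finset.sum_mul, Finset.mul_sum]
        rw [Finset.sum_comm]
        apply Finset.sum_congr rfl; intro k _
        apply Finset.sum_congr rfl; intro l _
        ring
      rw [this, key]
      simp
    have hpcoeff : ∀ k, p.coeff k = ((A.charpoly.coeff k : ℝ) : ℂ) := by
      intro k
      rw [hpdef, Matrix.charpoly_map, Polynomial.coeff_map]
      rfl
    calc ∑ k ∈ Finset.range (np+1), p.coeff k * F k t
        = ((∑ k ∈ Finset.range (np+1), A.charpoly.coeff k * (((A^k).mulVec (x t)) i) : ℝ) : ℂ) := by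
          push_cast
          apply Finset.sum_congr rfl; intro k _
          rw [hpcoeff k, hFdef]
      _ = 0 := by rw [hreal]; simp
  have hbound := hC₁ F hFder hFrel t ht
  have hF0 : F 0 t = ((x t i : ℝ) : ℂ) := by rw [hFdef]; simp [Matrix.one_mulVec]
  have hSbd : ∑ j ∈ Finset.range np, ‖F j 0‖ ≤ K₃ * W := by
    rw [hK₃def, Finset.sum_mul]
    apply Finset.sum_le_sum
    intro j hj
    have h1 : ‖F j 0‖ = |((A^j).mulVec (x 0)) i| := by
      rw [hFdef]; exact RCLike.norm_ofReal (K := ℂ) _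
    rw [h1]
    calc |((A^j).mulVec (x 0)) i| ≤ ∑ k, |(A^j) i k| * |x 0 k| := by
          simp only [Matrix.mulVec, dotProduct]
          refine (Finset.abs_sum_le_sum_abs _ _).trans ?_
          apply Finset.sum_le_sum; intro k _; rw [abs_mul]
      _ ≤ ∑ k, |(A^j) i k| * W := by
          apply Finset.sum_le_sum; intro k _
          apply mul_le_mul_of_nonneg_left _ (abs_nonneg _)
          exact Finset.single_le_sum (f := fun k => |x 0 k|) (fun l _ => abs_nonneg _) (Finset.mem_univ k)
      _ = (∑ k, |(A^j) i k|) * W := by rw [Finset.sum_mul]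
      _ ≤ (∑ i' : ι, ∑ k, |(A^j) i' k|) * W := by
          apply mul_le_mul_of_nonneg_right _ hW0
          exact Finset.single_le_sum (f := fun i' => ∑ k, |(A^j) i' k|)
            (fun l _ => Finset.sum_nonneg fun k _ => abs_nonneg _) (Finset.mem_univ i)
  have habs : |x t i| ≤ C₁ * (1+t)^np * Real.exp (-γ*t) * (K₃ * W) := by
    have := hbound
    rw [hF0] at this
    rw [Complex.norm_real, Real.norm_eq_abs] at this
    refine this.trans ?_
    apply mul_le_mul_of_nonneg_left hSbd (by positivity)
  refine habs.trans ?_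
  have hpe := hK₂ t ht
  calc C₁ * (1+t)^np * Real.exp (-γ*t) * (K₃ * W)
      ≤ C₁ * (K₂ * Real.exp (γ/2 * t)) * Real.exp (-γ*t) * (K₃ * W) := by
        have := mul_le_mul_of_nonneg_left hpe hC₁0
        have h2 : 0 ≤ Real.exp (-γ*t) * (K₃ * W) := by positivity
        nlinarith [mul_le_mul_of_nonneg_right (mul_le_mul_of_nonneg_left hpe hC₁0) h2]
    _ = (C₁ * K₂ * K₃) * (Real.exp (γ/2 * t) * Real.exp (-γ*t)) * W := by ring
    _ = (C₁ * K₂ * K₃) * Real.exp (-(γ/2) * t) * W := by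
        rw [← Real.exp_add]; ring_nf
    _ ≤ (C₁ * K₂ * K₃ + 1) * Real.exp (-(γ/2) * t) * W := by
        have : 0 ≤ Real.exp (-(γ/2) * t) * W := by positivity
        nlinarith


lemma Zs_decay (ke : ℝ) (Ω₀ : ℝ → Fin 3 → ℝ) (Zs : ℝ → Mat3)
    (hsym : ∀ t, 0 ≤ t → (Zs t)ᵀ = Zs t)
    (hder : ∀ t, 0 ≤ t → HasDerivAt Zs (mcomm (Zs t) (hat (Ω₀ t)) - (2 * ke) • Zs t) t) :
    ∀ t, 0 ≤ t → ‖Zs t‖ = Real.exp (-(2*ke)*t) * ‖Zs 0‖ := by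
  set q : ℝ → ℝ := fun s => ∑ i, ∑ j, (Zs s i j)^2 with hqdef
  have hE : ∀ (i j : Fin 3) (t : ℝ), 0 ≤ t → HasDerivAt (fun s => Zs s i j)
      ((mcomm (Zs t) (hat (Ω₀ t)) - (2 * ke) • Zs t) i j) t := by
    intro i j t ht
    have hL := (LinearMap.toContinuousLinearMap
      (Matrix.entryLinearMap ℝ ℝ i j)).hasFDerivAt.comp_hasDerivAt t (hder t ht)
    exact hL
  have hq' : ∀ t : ℝ, 0 ≤ t → HasDerivAt q (-(4*ke) * q t) t := by
    intro t ht
    have h1 : HasDerivAt q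
        (∑ i, ∑ j, 2 * Zs t i j * ((mcomm (Zs t) (hat (Ω₀ t)) - (2 * ke) • Zs t) i j)) t := by
      apply HasDerivAt.fun_sum
      intro i _
      apply HasDerivAt.fun_sum
      intro j _
      have := (hE i j t ht).fun_pow 2
      simpa using this
    have halg : (∑ i, ∑ j, 2 * Zs t i j * ((mcomm (Zs t) (hat (Ω₀ t)) - (2 * ke) • Zs t) i j))
        = -(4*ke) * q t := by
      have h10 : Zs t 1 0 = Zs t 0 1 := by
        have := congrFun (congrFun (hsym t ht) 0) 1
        simpa [Matrix.transpose_apply] using this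
      have h20 : Zs t 2 0 = Zs t 0 2 := by
        have := congrFun (congrFun (hsym t ht) 0) 2
        simpa [Matrix.transpose_apply] using this
      have h21 : Zs t 2 1 = Zs t 1 2 := by
        have := congrFun (congrFun (hsym t ht) 1) 2
        simpa [Matrix.transpose_apply] using this
      simp only [hqdef, mcomm, hat, Matrix.sub_apply, Matrix.smul_apply, Matrix.mul_apply,
        smul_eq_mul, Fin.sum_univ_three, Matrix.cons_val', Matrix.cons_val_zero,
        Matrix.cons_val_one, Matrix.head_cons, Matrix.empty_val', Matrix.cons_val_fin_one,
        Matrix.head_fin_const, Matrix.of_apply, Matrix.cons_val_two, Matrix.tail_cons]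
      rw [h10, h20, h21]
      ring
    rw [← halg]
    exact h1
  intro t ht
  have hφ : ∀ s : ℝ, 0 ≤ s → HasDerivAt (fun s => Real.exp ((4*ke)*s) * q s) 0 s := by
    intro s hs
    have h1 : HasDerivAt (fun s : ℝ => Real.exp ((4*ke)*s)) ((4*ke) * Real.exp ((4*ke)*s)) s := by
      simpa [mul_comm] using ((hasDerivAt_id s).const_mul (4*ke)).exp
    have := h1.mul (hq' s hs)
    refine this.congr_deriv ?_
    ring
  have hconst : Real.exp ((4*ke)*t) * q t = Real.exp ((4*ke)*0) * q 0 := by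
    have hcont : ContinuousOn (fun s => Real.exp ((4*ke)*s) * q s) (Set.Icc 0 t) :=
      fun s hs => ((hφ s hs.1).continuousAt).continuousWithinAt
    exact constant_of_has_deriv_right_zero hcont
      (fun s hs => (hφ s hs.1).hasDerivWithinAt) t (Set.right_mem_Icc.mpr ht)
  have hqt : q t = Real.exp (-(4*ke)*t) * q 0 := by
    have hne : Real.exp ((4*ke)*t) ≠ 0 := Real.exp_ne_zero _
    have h0 : Real.exp ((4*ke)*(0:ℝ)) = 1 := by norm_num
    rw [h0, one_mul] at hconst
    rw [← hconst]
    rw [show -(4*ke)*t = -((4*ke)*t) by ring, Real.exp_neg]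
    field_simp
  have hnorm : ∀ s : ℝ, ‖Zs s‖ = Real.sqrt (q s) := by
    intro s
    rw [Matrix.frobenius_norm_def, Real.sqrt_eq_rpow]
    congr 1
    apply Finset.sum_congr rfl
    intro i _
    apply Finset.sum_congr rfl
    intro j _
    rw [Real.norm_eq_abs, show (2:ℝ) = ((2:ℕ):ℝ) by norm_num, Real.rpow_natCast, sq_abs]
  rw [hnorm, hnorm, hqt]
  have hsplit : Real.exp (-(4*ke)*t) = (Real.exp (-(2*ke)*t))^2 := by
    rw [sq, ← Real.exp_add]
    ring_nf
  rw [hsplit, Real.sqrt_mul (sq_nonneg _), Real.sqrt_sq (Real.exp_nonneg _)]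


lemma cross_abs_le (a b : Fin 3 → ℝ) (Mb : ℝ) (hb : ∀ i, |b i| ≤ Mb) (i : Fin 3) :
    |cross a b i| ≤ 2 * Mb * enorm3 a := by
  have hMb0 : 0 ≤ Mb := (abs_nonneg _).trans (hb 0)
  have e1 := abs_le_enorm3 a
  have he : 0 ≤ enorm3 a := enorm3_nonneg a
  have key : ∀ p q r s : Fin 3, |a p * b q - a r * b s| ≤ 2 * Mb * enorm3 a := by
    intro p q r s
    have h1 : |a p * b q - a r * b s| ≤ |a p * b q| + |a r * b s| := by
      rw [sub_eq_add_neg]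
      refine (abs_add_le _ _).trans ?_
      rw [abs_neg]
    rw [abs_mul, abs_mul] at h1
    nlinarith [e1 p, e1 r, hb q, hb s, abs_nonneg (a p), abs_nonneg (a r),
      abs_nonneg (b q), abs_nonneg (b s)]
  fin_cases i
  · show |cross a b 0| ≤ 2 * Mb * enorm3 a
    simpa [cross] using key 1 2 2 1
  · show |cross a b 1| ≤ 2 * Mb * enorm3 a
    simpa [cross] using key 2 0 0 2
  · show |cross a b 2| ≤ 2 * Mb * enorm3 a
    simpa [cross] using key 0 1 1 0


set_option maxHeartbeats 1000000 in
/-- Proposition 1: the feedback `Δu = −K_P z − K_D(z×Ω₀+ΔΩ) − (z×Ω₀+ΔΩ)×Ω₀ − z×u₀`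
exponentially stabilizes the origin of the linearized rigid body tracking error
dynamics, provided `[[0, I],[−K_P, −K_D]]` is Hurwitz. -/
theorem prop1_exp_stabilization (ke : ℝ) (hke : 0 < ke)
    (Ω₀ u₀ : ℝ → Fin 3 → ℝ)
    (hΩ₀diff : ∀ t, 0 ≤ t → HasDerivAt Ω₀ (u₀ t) t)
    (hΩ₀bdd : ∃ M, ∀ t, 0 ≤ t → enorm3 (Ω₀ t) ≤ M)
    (KP KD : Mat3)
    (hHur : IsHurwitzMat (Matrix.fromBlocks (0 : Mat3) (1 : Mat3) (-KP) (-KD))) :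
    ∃ C > (0:ℝ), ∃ lam > (0:ℝ),
      ∀ (Zs : ℝ → Mat3) (z ω : ℝ → Fin 3 → ℝ),
        (∀ t, 0 ≤ t → (Zs t)ᵀ = Zs t) →
        (∀ t, 0 ≤ t →
          HasDerivAt Zs (mcomm (Zs t) (hat (Ω₀ t)) - (2 * ke) • Zs t) t) →
        (∀ t, 0 ≤ t → HasDerivAt z (cross (z t) (Ω₀ t) + ω t) t) →
        (∀ t, 0 ≤ t → HasDerivAt ω
          (-(KP.mulVec (z t)) - KD.mulVec (cross (z t) (Ω₀ t) + ω t)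
            - cross (cross (z t) (Ω₀ t) + ω t) (Ω₀ t) - cross (z t) (u₀ t)) t) →
        ∀ t, 0 ≤ t →
          ‖Zs t‖ + enorm3 (z t) + enorm3 (ω t) ≤
            C * Real.exp (-lam * t) * (‖Zs 0‖ + enorm3 (z 0) + enorm3 (ω 0)) := by
  classical
  obtain ⟨M₀, hM₀⟩ := hΩ₀bdd
  set M : ℝ := max M₀ 0 with hMdef
  have hM0 : 0 ≤ M := le_max_right _ _
  have hMb : ∀ t, 0 ≤ t → ∀ i, |Ω₀ t i| ≤ M := by
    intro t ht i
    exact (abs_le_enorm3 _ i).trans ((hM₀ t ht).trans (le_max_left _ _))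
  obtain ⟨C₂, hC₂, lam₂, hlam₂, hdec⟩ := linear_system_decay
    (Matrix.fromBlocks (0 : Mat3) (1 : Mat3) (-KP) (-KD)) hHur
  refine ⟨1 + (6 + 18*M) * C₂ * (3 + 6*M), by positivity,
    min lam₂ (2*ke), lt_min hlam₂ (by positivity), ?_⟩
  intro Zs z ω hZsym hZder hzder hωder t ht
  set lam : ℝ := min lam₂ (2*ke) with hlamdef
  have hlam : 0 < lam := lt_min hlam₂ (by positivity)
  -- the linear system variable
  set x : ℝ → (Fin 3 ⊕ Fin 3) → ℝ :=
    fun s => Sum.elim (z s) (cross (z s) (Ω₀ s) + ω s) with hxdef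
  -- derivative of the cross term
  have hvder : ∀ s : ℝ, 0 ≤ s → HasDerivAt (fun r => cross (z r) (Ω₀ r) + ω r)
      (-(KP.mulVec (z s)) - KD.mulVec (cross (z s) (Ω₀ s) + ω s)) s := by
    intro s hs
    have hz := hasDerivAt_pi.mp (hzder s hs)
    have hΩ := hasDerivAt_pi.mp (hΩ₀diff s hs)
    have h1 : HasDerivAt (fun r => cross (z r) (Ω₀ r))
        (cross (cross (z s) (Ω₀ s) + ω s) (Ω₀ s) + cross (z s) (u₀ s)) s := by
      apply hasDerivAt_pi.mpr
      intro i
      fin_cases i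
      · show HasDerivAt (fun r => cross (z r) (Ω₀ r) 0)
          ((cross (cross (z s) (Ω₀ s) + ω s) (Ω₀ s) + cross (z s) (u₀ s)) 0) s
        have hfun : (fun r => cross (z r) (Ω₀ r) 0)
            = fun r => z r 1 * Ω₀ r 2 - z r 2 * Ω₀ r 1 := by
          funext r; simp [cross]
        rw [hfun]
        refine (((hz 1).mul (hΩ 2)).sub ((hz 2).mul (hΩ 1))).congr_deriv ?_
        simp [cross]
        ring
      · show HasDerivAt (fun r => cross (z r) (Ω₀ r) 1)
          ((cross (cross (z s) (Ω₀ s) + ω s) (Ω₀ s) + cross (z s) (u₀ s)) 1) s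
        have hfun : (fun r => cross (z r) (Ω₀ r) 1)
            = fun r => z r 2 * Ω₀ r 0 - z r 0 * Ω₀ r 2 := by
          funext r; simp [cross]
        rw [hfun]
        refine (((hz 2).mul (hΩ 0)).sub ((hz 0).mul (hΩ 2))).congr_deriv ?_
        simp [cross]
        ring
      · show HasDerivAt (fun r => cross (z r) (Ω₀ r) 2)
          ((cross (cross (z s) (Ω₀ s) + ω s) (Ω₀ s) + cross (z s) (u₀ s)) 2) s
        have hfun : (fun r => cross (z r) (Ω₀ r) 2)
            = fun r => z r 0 * Ω₀ r 1 - z r 1 * Ω₀ r 0 := by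
          funext r; simp [cross]
        rw [hfun]
        refine (((hz 0).mul (hΩ 1)).sub ((hz 1).mul (hΩ 0))).congr_deriv ?_
        simp [cross]
        ring
    have h2 := h1.add (hωder s hs)
    refine h2.congr_deriv ?_
    funext i
    simp only [Pi.add_apply, Pi.sub_apply, Pi.neg_apply]
    ring
  -- the closed linear system
  have hx : ∀ s : ℝ, 0 ≤ s → HasDerivAt x
      ((Matrix.fromBlocks (0 : Mat3) (1 : Mat3) (-KP) (-KD)).mulVec (x s)) s := by
    intro s hs
    have hAx : (Matrix.fromBlocks (0 : Mat3) (1 : Mat3) (-KP) (-KD)).mulVec (x s)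
        = Sum.elim (cross (z s) (Ω₀ s) + ω s)
            (-(KP.mulVec (z s)) - KD.mulVec (cross (z s) (Ω₀ s) + ω s)) := by
      rw [show x s = Sum.elim (z s) (cross (z s) (Ω₀ s) + ω s) from rfl,
        Matrix.fromBlocks_mulVec, Matrix.zero_mulVec, Matrix.one_mulVec, zero_add,
        Matrix.neg_mulVec, Matrix.neg_mulVec]
      funext k
      rcases k with i | i <;> simp [sub_eq_add_neg]
    rw [hAx]
    apply hasDerivAt_pi.mpr
    rintro (i | i)
    · exact hasDerivAt_pi.mp (hzder s hs) i
    · exact hasDerivAt_pi.mp (hvder s hs) i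
  have hsol := hdec x hx
  set W : ℝ := ∑ k, |x 0 k| with hWdef
  have hW0 : 0 ≤ W := Finset.sum_nonneg fun k _ => abs_nonneg _
  set T₀ : ℝ := ‖Zs 0‖ + enorm3 (z 0) + enorm3 (ω 0) with hT₀def
  have hT₀0 : 0 ≤ T₀ := by
    have := norm_nonneg (Zs 0)
    have := enorm3_nonneg (z 0)
    have := enorm3_nonneg (ω 0)
    positivity
  have hWT : W ≤ (3 + 6*M) * T₀ := by
    have hWsplit : W = (∑ i, |z 0 i|) + ∑ i, |(cross (z 0) (Ω₀ 0) + ω 0) i| := by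
      rw [hWdef]
      exact Fintype.sum_sum_type _
    have h1 : ∑ i, |z 0 i| ≤ 3 * enorm3 (z 0) := by
      have := abs_le_enorm3 (z 0)
      rw [Fin.sum_univ_three]
      linarith [this 0, this 1, this 2]
    have h2 : ∑ i, |(cross (z 0) (Ω₀ 0) + ω 0) i| ≤
        3 * (2 * M * enorm3 (z 0) + enorm3 (ω 0)) := by
      have hb : ∀ i, |(cross (z 0) (Ω₀ 0) + ω 0) i| ≤ 2 * M * enorm3 (z 0) + enorm3 (ω 0) := by
        intro i
        have hc := cross_abs_le (z 0) (Ω₀ 0) M (hMb 0 le_rfl) i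
        have hω := abs_le_enorm3 (ω 0) i
        calc |(cross (z 0) (Ω₀ 0) + ω 0) i| ≤ |cross (z 0) (Ω₀ 0) i| + |ω 0 i| := by
              rw [Pi.add_apply]; exact abs_add_le _ _
          _ ≤ 2 * M * enorm3 (z 0) + enorm3 (ω 0) := by linarith
      rw [Fin.sum_univ_three]
      linarith [hb 0, hb 1, hb 2]
    have hez := enorm3_nonneg (z 0)
    have heω := enorm3_nonneg (ω 0)
    have hZn := norm_nonneg (Zs 0)
    rw [hWsplit, hT₀def]
    nlinarith
  -- decay of each linear coordinate
  set D : ℝ := C₂ * Real.exp (-lam₂ * t) * W with hDdef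
  have hD0 : 0 ≤ D := by positivity
  have hxt : ∀ i, |x t i| ≤ D := fun i => hsol t ht i
  have hzt : enorm3 (z t) ≤ 3 * D := by
    have h1 : ∀ i : Fin 3, |z t i| ≤ D := fun i => hxt (Sum.inl i)
    calc enorm3 (z t) ≤ ∑ i, |z t i| := enorm3_le_sum (z t)
      _ ≤ 3 * D := by rw [Fin.sum_univ_three]; linarith [h1 0, h1 1, h1 2]
  have hωt : enorm3 (ω t) ≤ (3 + 18*M) * D := by
    have h1 : ∀ i : Fin 3, |ω t i| ≤ (1 + 6*M) * D := by
      intro i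
      have hv := hxt (Sum.inr i)
      have hvi : |(cross (z t) (Ω₀ t) + ω t) i| ≤ D := hv
      have hc := cross_abs_le (z t) (Ω₀ t) M (hMb t ht) i
      have : |ω t i| ≤ |(cross (z t) (Ω₀ t) + ω t) i| + |cross (z t) (Ω₀ t) i| := by
        have := abs_add_le ((cross (z t) (Ω₀ t) + ω t) i) (-(cross (z t) (Ω₀ t) i))
        simpa [Pi.add_apply, abs_neg] using this
      nlinarith
    calc enorm3 (ω t) ≤ ∑ i, |ω t i| := enorm3_le_sum (ω t)
      _ ≤ (3 + 18*M) * D := by rw [Fin.sum_univ_three]; nlinarith [h1 0, h1 1, h1 2]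
  have hZt : ‖Zs t‖ = Real.exp (-(2*ke)*t) * ‖Zs 0‖ :=
    Zs_decay ke Ω₀ Zs hZsym hZder t ht
  -- exponential comparisons
  have hexp1 : Real.exp (-(2*ke)*t) ≤ Real.exp (-lam * t) := by
    apply Real.exp_le_exp.mpr
    have : lam ≤ 2*ke := min_le_right _ _
    nlinarith
  have hexp2 : Real.exp (-lam₂ * t) ≤ Real.exp (-lam * t) := by
    apply Real.exp_le_exp.mpr
    have : lam ≤ lam₂ := min_le_left _ _
    nlinarith
  have hZn := norm_nonneg (Zs 0)
  have hez := enorm3_nonneg (z 0)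
  have heω := enorm3_nonneg (ω 0)
  have hZT : ‖Zs 0‖ ≤ T₀ := by rw [hT₀def]; linarith
  have hDb : D ≤ C₂ * Real.exp (-lam * t) * ((3 + 6*M) * T₀) := by
    rw [hDdef]
    have h1 : C₂ * Real.exp (-lam₂ * t) ≤ C₂ * Real.exp (-lam * t) :=
      mul_le_mul_of_nonneg_left hexp2 (le_of_lt hC₂)
    have h2 : 0 ≤ C₂ * Real.exp (-lam * t) := by positivity
    nlinarith [mul_le_mul h1 hWT hW0 h2]
  calc ‖Zs t‖ + enorm3 (z t) + enorm3 (ω t)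
      ≤ Real.exp (-(2*ke)*t) * ‖Zs 0‖ + 3*D + (3 + 18*M)*D := by
        rw [hZt]; linarith
    _ ≤ Real.exp (-lam * t) * T₀ + (6 + 18*M) * D := by
        have h1 : Real.exp (-(2*ke)*t) * ‖Zs 0‖ ≤ Real.exp (-lam * t) * T₀ := by
          have := mul_le_mul hexp1 hZT hZn (Real.exp_nonneg _)
          linarith
        linarith
    _ ≤ Real.exp (-lam * t) * T₀
        + (6 + 18*M) * (C₂ * Real.exp (-lam * t) * ((3 + 6*M) * T₀)) := by
        have : (0:ℝ) ≤ 6 + 18*M := by linarith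
        nlinarith [hDb]
    _ = (1 + (6 + 18*M) * C₂ * (3 + 6*M)) * Real.exp (-lam * t) * T₀ := by ring


end
end

section
/- Let k_e > 0, let Ω₀ : [0,∞) → ℝ³ be continuous and bounded, let k_P > 0 be a real number, and let K_D ∈ ℝ^{3×3} be positive definite and symmetric. Then there exist constants C > 0 and λ > 0 such that every solution (Z_s, z, ω) : [0,∞) → Sym(ℝ^{3×3}) × ℝ³ × ℝ³ of the closed-loop system Ż_s = [Z_s, Ω̂₀(t)] − 2k_e Z_s, ż = z × Ω₀(t) + ω, ω̇ = −k_P z − K_D ω, satisfies ‖Z_s(t)‖ + ‖z(t)‖ + ‖ω(t)‖ ≤ C·e^{−λt}·(‖Z_s(0)‖ + ‖z(0)‖ + ‖ω(0)‖) for all t ≥ 0. -/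
open Matrix

attribute [local instance] Matrix.frobeniusNormedAddCommGroup Matrix.frobeniusNormedSpace

noncomputable section

lemma key1 (s a b : ℝ) (ha : 0 ≤ a) (hb : 0 ≤ b) (h : s^2 ≤ a*b) : s ≤ (a+b)/2 := by
  nlinarith [sq_nonneg (a-b), sq_nonneg (a+b-2*s)]

lemma cs3 (a b c d e f : ℝ) : (a*d+b*e+c*f)^2 ≤ (a^2+b^2+c^2)*(d^2+e^2+f^2) := by
  nlinarith [sq_nonneg (a*e-b*d), sq_nonneg (a*f-c*d), sq_nonneg (b*f-c*e)]

lemma sqrt_sum_le (a b : ℝ) (ha : 0 ≤ a) (hb : 0 ≤ b) :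
    Real.sqrt a + Real.sqrt b ≤ Real.sqrt (2*(a+b)) := by
  have h1 := Real.sq_sqrt ha; have h2 := Real.sq_sqrt hb
  have h3 := Real.sqrt_nonneg a; have h4 := Real.sqrt_nonneg b
  have h5 : (Real.sqrt a + Real.sqrt b)^2 ≤ 2*(a+b) := by
    nlinarith [sq_nonneg (Real.sqrt a - Real.sqrt b)]
  calc Real.sqrt a + Real.sqrt b = Real.sqrt ((Real.sqrt a + Real.sqrt b)^2) :=
        (Real.sqrt_sq (by positivity)).symm
    _ ≤ Real.sqrt (2*(a+b)) := Real.sqrt_le_sqrt h5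

lemma sqrt_add_le' (a b : ℝ) (ha : 0 ≤ a) (hb : 0 ≤ b) :
    Real.sqrt (a+b) ≤ Real.sqrt a + Real.sqrt b := by
  have h1 := Real.sq_sqrt ha; have h2 := Real.sq_sqrt hb
  have h3 := Real.sqrt_nonneg a; have h4 := Real.sqrt_nonneg b
  have h5 : a + b ≤ (Real.sqrt a + Real.sqrt b)^2 := by nlinarith [mul_nonneg h3 h4]
  calc Real.sqrt (a+b) ≤ Real.sqrt ((Real.sqrt a + Real.sqrt b)^2) := Real.sqrt_le_sqrt h5
    _ = Real.sqrt a + Real.sqrt b := Real.sqrt_sq (by positivity)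

lemma gronwall (V V' : ℝ → ℝ) (lam : ℝ)
    (hd : ∀ t, 0 ≤ t → HasDerivAt V (V' t) t)
    (hle : ∀ t, 0 ≤ t → V' t ≤ -lam * V t) :
    ∀ t, 0 ≤ t → V t ≤ V 0 * Real.exp (-lam * t) := by
  intro t ht
  set W : ℝ → ℝ := fun s => V s * Real.exp (lam * s) with hW
  have hWd : ∀ s, 0 ≤ s →
      HasDerivAt W (V' s * Real.exp (lam * s) + V s * (lam * Real.exp (lam * s))) s := by
    intro s hs
    exact (hd s hs).mul ((Real.hasDerivAt_exp (lam*s)).comp s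
      ((hasDerivAt_id s).const_mul lam) |>.congr_deriv (by ring))
  have hanti : AntitoneOn W (Set.Ici (0:ℝ)) := by
    apply antitoneOn_of_deriv_nonpos (convex_Ici 0)
    · intro s hs
      exact ((hWd s hs).continuousAt).continuousWithinAt
    · intro s hs
      rw [interior_Ici] at hs
      exact (hWd s (le_of_lt hs)).differentiableAt.differentiableWithinAt
    · intro s hs
      rw [interior_Ici] at hs
      rw [(hWd s (le_of_lt hs)).deriv]
      have := hle s (le_of_lt hs)
      have hexp : (0:ℝ) < Real.exp (lam * s) := Real.exp_pos _
      nlinarith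
  have h0 : W t ≤ W 0 := hanti (le_refl (0:ℝ) : (0:ℝ) ∈ Set.Ici (0:ℝ)) (by exact ht) ht
  simp only [hW, mul_zero, Real.exp_zero, mul_one] at h0
  have h1 := mul_le_mul_of_nonneg_right h0 (le_of_lt (Real.exp_pos (-lam*t)))
  rw [mul_assoc, ← Real.exp_add] at h1
  simpa using h1

lemma entry_hasDerivAt {Z : ℝ → Mat3} {A : Mat3} {t : ℝ}
    (h : HasDerivAt Z A t) (i j : Fin 3) :
    HasDerivAt (fun s => Z s i j) (A i j) t := by
  let L : Mat3 →ₗ[ℝ] ℝ :=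
    { toFun := fun B => B i j
      map_add' := fun B C => rfl
      map_smul' := fun c B => rfl }
  exact L.toContinuousLinearMap.hasFDerivAt.comp_hasDerivAt t h

lemma matkey (Z : Mat3) (w : Fin 3 → ℝ) (ke : ℝ) (hs : Zᵀ = Z) :
    (∑ i : Fin 3, ∑ j : Fin 3, 2 * Z i j * ((mcomm Z (hat w) - (2*ke) • Z) i j))
    = -(4*ke) * ∑ i : Fin 3, ∑ j : Fin 3, (Z i j)^2 := by
  have h01 : Z 1 0 = Z 0 1 := congrFun (congrFun hs 0) 1
  have h02 : Z 2 0 = Z 0 2 := congrFun (congrFun hs 0) 2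
  have h12 : Z 2 1 = Z 1 2 := congrFun (congrFun hs 1) 2
  simp only [mcomm, hat, Matrix.sub_apply, Matrix.smul_apply, smul_eq_mul,
    Matrix.mul_apply, Fin.sum_univ_three, Matrix.cons_val', Matrix.cons_val_zero,
    Matrix.cons_val_one, Matrix.head_cons, Matrix.empty_val', Matrix.cons_val_fin_one,
    Matrix.head_fin_const, Matrix.cons_val_two, Matrix.tail_cons]
  rw [h01, h02, h12]
  ring

lemma posdef_lower (KD : Mat3) (hKD : KD.PosDef) :
    ∃ m > (0:ℝ), ∀ x : Fin 3 → ℝ, m * (∑ i, x i ^ 2) ≤ ∑ i, x i * (KD *ᵥ x) i := by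
  classical
  set f : (Fin 3 → ℝ) → ℝ := fun x => ∑ i, x i * (KD *ᵥ x) i with hf
  have hfc : Continuous f := by
    have hfeq : f = fun x => ∑ i : Fin 3, ∑ j : Fin 3, x i * (KD i j * x j) := by
      funext x; simp [f, Matrix.mulVec, dotProduct, Finset.mul_sum]
    rw [hfeq]
    exact continuous_finset_sum _ fun i _ => continuous_finset_sum _ fun j _ =>
      (continuous_apply i).mul (continuous_const.mul (continuous_apply j))
  set S : Set (Fin 3 → ℝ) := {x | ∑ i, x i ^ 2 = 1} with hS
  have hclosed : IsClosed S := by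
    have : Continuous fun x : Fin 3 → ℝ => ∑ i, x i ^ 2 :=
      continuous_finset_sum _ fun i _ => (continuous_apply i).pow 2
    exact isClosed_eq this continuous_const
  have hbdd : Bornology.IsBounded S := by
    rw [isBounded_iff_forall_norm_le]
    refine ⟨1, fun x hx => ?_⟩
    rw [pi_norm_le_iff_of_nonneg zero_le_one]
    intro i
    have h1 : x i ^ 2 ≤ 1 := by
      have := Finset.single_le_sum (f := fun i => x i ^ 2)
        (fun j _ => sq_nonneg (x j)) (Finset.mem_univ i)
      simpa [hx] using this.trans_eq hx
    rw [Real.norm_eq_abs]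
    nlinarith [abs_nonneg (x i), sq_abs (x i)]
  have hcomp : IsCompact S := Metric.isCompact_of_isClosed_isBounded hclosed hbdd
  have hne : S.Nonempty := ⟨![1,0,0], by simp [hS, Fin.sum_univ_three]⟩
  obtain ⟨x₀, hx₀S, hmin⟩ := hcomp.exists_isMinOn hne hfc.continuousOn
  have hx₀ne : x₀ ≠ 0 := by
    intro h
    have : (∑ i, x₀ i ^ 2) = 1 := hx₀S
    rw [h] at this; simp at this
  have hm : 0 < f x₀ := by
    have := hKD.dotProduct_mulVec_pos hx₀ne
    simpa [f, dotProduct, star_trivial] using this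
  refine ⟨f x₀, hm, fun x => ?_⟩
  by_cases hx : x = 0
  · simp [hx, f]
  · set s := Real.sqrt (∑ i, x i ^ 2) with hsdef
    have hsum : 0 < ∑ i, x i ^ 2 := by
      rcases Function.ne_iff.mp hx with ⟨i, hi⟩
      have : 0 < x i ^ 2 := lt_of_le_of_ne (sq_nonneg _) (Ne.symm (pow_ne_zero 2 hi))
      calc (0:ℝ) < x i ^ 2 := this
        _ ≤ _ := Finset.single_le_sum (f := fun i => x i ^ 2)
          (fun j _ => sq_nonneg (x j)) (Finset.mem_univ i)
    have hspos : 0 < s := Real.sqrt_pos.mpr hsum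
    have hssq : s ^ 2 = ∑ i, x i ^ 2 := Real.sq_sqrt hsum.le
    have hyS : (s⁻¹ • x) ∈ S := by
      simp only [hS, Set.mem_setOf_eq, Pi.smul_apply, smul_eq_mul, mul_pow]
      rw [← Finset.mul_sum, ← hssq]
      field_simp
    have hscale : f (s⁻¹ • x) = (s⁻¹)^2 * f x := by
      simp only [f, Matrix.mulVec, dotProduct, Fin.sum_univ_three, Pi.smul_apply, smul_eq_mul]
      ring
    have hfx : f x₀ ≤ (s⁻¹)^2 * f x := by
      have h := hmin hyS
      simp only [Set.mem_setOf_eq] at h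
      rwa [hscale] at h
    have h2 : f x₀ * s^2 ≤ f x := by
      have hs2 : (0:ℝ) < s^2 := by positivity
      calc f x₀ * s^2 ≤ ((s⁻¹)^2 * f x) * s^2 := by nlinarith
        _ = f x := by field_simp
    rw [← hssq]
    nlinarith [h2]


set_option maxHeartbeats 1600000 in
/-- Proposition 3: the feedback `Δu = −k_P z − K_D ΔΩ` (independent of the
reference control) exponentially stabilizes the origin of the linearized rigid
body tracking error dynamics. -/
theorem prop3_PD_exp_stabilization (ke : ℝ) (hke : 0 < ke)
    (Ω₀ : ℝ → Fin 3 → ℝ)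
    (hΩ₀cont : ContinuousOn Ω₀ (Set.Ici 0))
    (hΩ₀bdd : ∃ M, ∀ t, 0 ≤ t → enorm3 (Ω₀ t) ≤ M)
    (kP : ℝ) (hkP : 0 < kP) (KD : Mat3) (hKD : KD.PosDef) :
    ∃ C > (0:ℝ), ∃ lam > (0:ℝ),
      ∀ (Zs : ℝ → Mat3) (z ω : ℝ → Fin 3 → ℝ),
        (∀ t, 0 ≤ t → (Zs t)ᵀ = Zs t) →
        (∀ t, 0 ≤ t →
          HasDerivAt Zs (mcomm (Zs t) (hat (Ω₀ t)) - (2 * ke) • Zs t) t) →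
        (∀ t, 0 ≤ t → HasDerivAt z (cross (z t) (Ω₀ t) + ω t) t) →
        (∀ t, 0 ≤ t → HasDerivAt ω ((-kP) • z t - KD.mulVec (ω t)) t) →
        ∀ t, 0 ≤ t →
          ‖Zs t‖ + enorm3 (z t) + enorm3 (ω t) ≤
            C * Real.exp (-lam * t) * (‖Zs 0‖ + enorm3 (z 0) + enorm3 (ω 0)) := by
  obtain ⟨M, hM⟩ := hΩ₀bdd
  have hMnn : 0 ≤ M := le_trans (Real.sqrt_nonneg _) (hM 0 le_rfl)
  obtain ⟨m, hm, hmlow⟩ := posdef_lower KD hKD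
  set L2 : ℝ := ∑ i : Fin 3, ∑ j : Fin 3, (KD i j)^2 with hL2def
  have hL2nn : 0 ≤ L2 := by
    apply Finset.sum_nonneg; intro i _; apply Finset.sum_nonneg; intro j _; positivity
  have hL2e : L2 = KD 0 0^2 + KD 0 1^2 + KD 0 2^2 + (KD 1 0^2 + KD 1 1^2 + KD 1 2^2)
      + (KD 2 0^2 + KD 2 1^2 + KD 2 2^2) := by
    simp [hL2def, Fin.sum_univ_three]
  set D : ℝ := 1 + (M^2 + L2)/kP with hDdef
  have hDpos : 0 < D := by positivity
  set ε : ℝ := min (min kP 1) (m / D) with hεdef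
  have hεpos : 0 < ε := lt_min (lt_min hkP one_pos) (div_pos hm hDpos)
  have hεmin : ε ≤ min kP 1 := min_le_left _ _
  have hεkP : ε ≤ kP := le_trans hεmin (min_le_left _ _)
  have hε1 : ε ≤ 1 := le_trans hεmin (min_le_right _ _)
  have hεD : ε * D ≤ m := by
    have h1 : ε ≤ m / D := min_le_right (min kP 1) (m / D)
    have h2 : ε * D ≤ (m / D) * D := mul_le_mul_of_nonneg_right h1 hDpos.le
    rwa [div_mul_cancel₀ _ (ne_of_gt hDpos)] at h2
  set c1 : ℝ := min kP 1 / 2 with hc1def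
  have hminkP1pos : 0 < min kP 1 := lt_min hkP one_pos
  have hc1pos : 0 < c1 := by simp only [hc1def]; linarith
  set c2 : ℝ := kP + 3/2 with hc2def
  have hc2pos : 0 < c2 := by simp only [hc2def]; linarith
  set c : ℝ := min (ε*kP/2) m with hcdef
  have hcpos : 0 < c := lt_min (by positivity) hm
  have hcle1 : c ≤ ε*kP/2 := min_le_left _ _
  have hcle2 : c ≤ m := min_le_right _ _
  set lam1 : ℝ := c / c2 with hlam1def
  have hlam1pos : 0 < lam1 := div_pos hcpos hc2pos
  have hkeyc : lam1 * c2 = c := by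
    rw [hlam1def, div_mul_cancel₀ _ (ne_of_gt hc2pos)]
  set K : ℝ := Real.sqrt (2 * c2 / c1) with hKdef
  have hKnn : 0 ≤ K := Real.sqrt_nonneg _
  set lam : ℝ := min (2*ke) (lam1/2) with hlamdef
  have hlampos : 0 < lam := lt_min (by linarith) (by linarith)
  have hlam2ke : lam ≤ 2*ke := min_le_left _ _
  have hlamlam1 : lam ≤ lam1/2 := min_le_right _ _
  clear_value L2 D ε c1 c2 c lam1 K lam
  refine ⟨1 + K, by positivity, lam, hlampos, ?_⟩
  intro Zs z ω hsym hZ hz hω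
  -- Part A : the matrix part
  set g : ℝ → ℝ := fun s =>
    Zs s 0 0^2 + Zs s 0 1^2 + Zs s 0 2^2 + Zs s 1 0^2 + Zs s 1 1^2 + Zs s 1 2^2
      + Zs s 2 0^2 + Zs s 2 1^2 + Zs s 2 2^2 with hgdef
  have hgnn : ∀ s, 0 ≤ g s := fun s => by simp only [hgdef]; positivity
  have hnormZ : ∀ s, ‖Zs s‖ = Real.sqrt (g s) := by
    intro s
    have hpow : ∀ x : ℝ, ‖x‖ ^ (2:ℝ) = x^2 := fun x => by
      rw [show ((2:ℝ)) = ((2:ℕ):ℝ) by norm_num, Real.rpow_natCast, Real.norm_eq_abs, sq_abs]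
    rw [Matrix.frobenius_norm_def, ← Real.sqrt_eq_rpow]
    congr 1
    simp only [Fin.sum_univ_three, hpow, hgdef]
    ring
  have hg : ∀ t, 0 ≤ t → HasDerivAt g (-(4*ke) * g t) t := by
    intro t ht
    have hE := fun (i j : Fin 3) => entry_hasDerivAt (hZ t ht) i j
    have h1 := ((hE 0 0).pow 2).add ((hE 0 1).pow 2)
    have h2 := h1.add ((hE 0 2).pow 2)
    have h3 := h2.add ((hE 1 0).pow 2)
    have h4 := h3.add ((hE 1 1).pow 2)
    have h5 := h4.add ((hE 1 2).pow 2)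
    have h6 := h5.add ((hE 2 0).pow 2)
    have h7 := h6.add ((hE 2 1).pow 2)
    have h := h7.add ((hE 2 2).pow 2)
    refine h.congr_deriv ?_
    have hmk := matkey (Zs t) (Ω₀ t) ke (hsym t ht)
    simp only [Fin.sum_univ_three] at hmk
    simp only [hgdef]
    push_cast
    linear_combination hmk
  have hgdecay := gronwall g (fun t => -(4*ke) * g t) (4*ke) hg
    (fun t ht => le_of_eq rfl)
  have hZbound : ∀ t, 0 ≤ t → ‖Zs t‖ ≤ Real.exp (-(2*ke)*t) * ‖Zs 0‖ := by
    intro t ht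
    rw [hnormZ t, hnormZ 0]
    calc Real.sqrt (g t) ≤ Real.sqrt (g 0 * Real.exp (-(4*ke) * t)) :=
          Real.sqrt_le_sqrt (hgdecay t ht)
      _ = Real.sqrt (g 0) * Real.sqrt (Real.exp (-(4*ke)*t)) := Real.sqrt_mul (hgnn 0) _
      _ = Real.exp (-(2*ke)*t) * Real.sqrt (g 0) := by
          rw [← Real.exp_half, show (-(4*ke)*t)/2 = -(2*ke)*t by ring]; ring
  -- Part B : the (z, ω) part
  set p : ℝ → ℝ := fun s => z s 0^2 + z s 1^2 + z s 2^2 with hpdef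
  set q : ℝ → ℝ := fun s => ω s 0^2 + ω s 1^2 + ω s 2^2 with hqdef
  set r : ℝ → ℝ := fun s => z s 0 * ω s 0 + z s 1 * ω s 1 + z s 2 * ω s 2 with hrdef
  set Q : ℝ → ℝ := fun s =>
    ω s 0 * (KD *ᵥ ω s) 0 + ω s 1 * (KD *ᵥ ω s) 1 + ω s 2 * (KD *ᵥ ω s) 2 with hQdef
  set Sf : ℝ → ℝ := fun s =>
    (z s 1 * Ω₀ s 2 - z s 2 * Ω₀ s 1) * ω s 0 + (z s 2 * Ω₀ s 0 - z s 0 * Ω₀ s 2) * ω s 1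
      + (z s 0 * Ω₀ s 1 - z s 1 * Ω₀ s 0) * ω s 2 with hSdef
  set Tf : ℝ → ℝ := fun s =>
    z s 0 * (KD *ᵥ ω s) 0 + z s 1 * (KD *ᵥ ω s) 1 + z s 2 * (KD *ᵥ ω s) 2 with hTdef
  set V : ℝ → ℝ := fun s => kP * p s + q s + ε * r s with hVdef
  set V' : ℝ → ℝ := fun s =>
    kP * (2 * r s) + (-(2*kP) * r s - 2 * Q s) + ε * (Sf s + q s - kP * p s - Tf s) with hV'def
  have hpnn : ∀ s, 0 ≤ p s := fun s => by simp only [hpdef]; positivity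
  have hqnn : ∀ s, 0 ≤ q s := fun s => by simp only [hqdef]; positivity
  have hr2 : ∀ s, (r s)^2 ≤ p s * q s := fun s => by
    simp only [hpdef, hqdef, hrdef]
    exact cs3 (z s 0) (z s 1) (z s 2) (ω s 0) (ω s 1) (ω s 2)
  have hrup : ∀ s, r s ≤ (p s + q s)/2 := fun s =>
    key1 _ _ _ (hpnn s) (hqnn s) (hr2 s)
  have hrdn : ∀ s, -(r s) ≤ (p s + q s)/2 := fun s =>
    key1 _ _ _ (hpnn s) (hqnn s) (by rw [neg_sq]; exact hr2 s)
  have hzc : ∀ t, 0 ≤ t → ∀ i, HasDerivAt (fun s => z s i)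
      ((cross (z t) (Ω₀ t) + ω t) i) t := fun t ht i => hasDerivAt_pi.mp (hz t ht) i
  have hωc : ∀ t, 0 ≤ t → ∀ i, HasDerivAt (fun s => ω s i)
      (((-kP) • z t - KD *ᵥ ω t) i) t := fun t ht i => hasDerivAt_pi.mp (hω t ht) i
  have hcross : ∀ (u v : Fin 3 → ℝ),
      cross u v 0 = u 1 * v 2 - u 2 * v 1 ∧ cross u v 1 = u 2 * v 0 - u 0 * v 2 ∧
        cross u v 2 = u 0 * v 1 - u 1 * v 0 := by
    intro u v; refine ⟨rfl, rfl, rfl⟩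
  have hVd : ∀ t, 0 ≤ t → HasDerivAt V (V' t) t := by
    intro t ht
    obtain ⟨hcr0, hcr1, hcr2⟩ := hcross (z t) (Ω₀ t)
    have hp : HasDerivAt p (2 * r t) t := by
      have h := (((hzc t ht 0).pow 2).add ((hzc t ht 1).pow 2)).add ((hzc t ht 2).pow 2)
      refine h.congr_deriv ?_
      simp only [hrdef, Pi.add_apply, hcr0, hcr1, hcr2]
      push_cast
      ring
    have hq : HasDerivAt q (-(2*kP) * r t - 2 * Q t) t := by
      have h := (((hωc t ht 0).pow 2).add ((hωc t ht 1).pow 2)).add ((hωc t ht 2).pow 2)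
      refine h.congr_deriv ?_
      simp only [hrdef, hQdef, Pi.sub_apply, Pi.smul_apply, smul_eq_mul]
      push_cast
      ring
    have hr : HasDerivAt r (Sf t + q t - kP * p t - Tf t) t := by
      have h := ((((hzc t ht 0).mul (hωc t ht 0)).add
        ((hzc t ht 1).mul (hωc t ht 1))).add ((hzc t ht 2).mul (hωc t ht 2)))
      refine h.congr_deriv ?_
      simp only [hSdef, hqdef, hpdef, hTdef, Pi.add_apply, Pi.sub_apply, Pi.smul_apply,
        smul_eq_mul, hcr0, hcr1, hcr2]
      ring
    exact ((hp.const_mul kP).add hq).add (hr.const_mul ε)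
  have hmulVec : ∀ s, ∀ i : Fin 3,
      (KD *ᵥ ω s) i = KD i 0 * ω s 0 + KD i 1 * ω s 1 + KD i 2 * ω s 2 := by
    intro s i; simp [Matrix.mulVec, dotProduct, Fin.sum_univ_three]
  clear_value g p q r Q Sf Tf V V'
  have hVup : ∀ s, V s ≤ c2 * (p s + q s) := by
    intro s
    have h1 : ε * r s ≤ ε * ((p s + q s)/2) := mul_le_mul_of_nonneg_left (hrup s) hεpos.le
    have h2 : ε * ((p s + q s)/2) ≤ 1 * ((p s + q s)/2) :=
      mul_le_mul_of_nonneg_right hε1 (by linarith [hpnn s, hqnn s])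
    have h3 : 0 ≤ kP * q s := mul_nonneg hkP.le (hqnn s)
    simp only [hVdef, hc2def]
    linarith [hpnn s, hqnn s]
  have hVlow : ∀ s, c1 * (p s + q s) ≤ V s := by
    intro s
    have h1 : ε * (-(r s)) ≤ ε * ((p s + q s)/2) := mul_le_mul_of_nonneg_left (hrdn s) hεpos.le
    have h2 : ε * ((p s + q s)/2) ≤ min kP 1 * ((p s + q s)/2) :=
      mul_le_mul_of_nonneg_right hεmin (by linarith [hpnn s, hqnn s])
    have h3 : min kP 1 * p s ≤ kP * p s :=
      mul_le_mul_of_nonneg_right (min_le_left _ _) (hpnn s)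
    have h4 : min kP 1 * q s ≤ 1 * q s :=
      mul_le_mul_of_nonneg_right (min_le_right _ _) (hqnn s)
    simp only [hVdef, hc1def]
    linarith
  have hle : ∀ t, 0 ≤ t → V' t ≤ -lam1 * V t := by
    intro t ht
    have hpe : p t = z t 0^2 + z t 1^2 + z t 2^2 := by simp only [hpdef]
    have hqe : q t = ω t 0^2 + ω t 1^2 + ω t 2^2 := by simp only [hqdef]
    have hΩsq : Ω₀ t 0^2 + Ω₀ t 1^2 + Ω₀ t 2^2 ≤ M^2 := by
      have h1 := hM t ht
      have h2 : Real.sqrt (Ω₀ t 0^2 + Ω₀ t 1^2 + Ω₀ t 2^2) ≤ M := by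
        simpa [enorm3, Fin.sum_univ_three] using h1
      have h3 : Ω₀ t 0^2 + Ω₀ t 1^2 + Ω₀ t 2^2
          = (Real.sqrt (Ω₀ t 0^2 + Ω₀ t 1^2 + Ω₀ t 2^2))^2 :=
        (Real.sq_sqrt (by positivity)).symm
      rw [h3]
      exact pow_le_pow_left₀ (Real.sqrt_nonneg _) h2 2
    -- bound on Sf
    have hS2 : (Sf t)^2 ≤ (kP * p t / 2) * (2 * M^2 * q t / kP) := by
      have hcs : (Sf t)^2 ≤ ((z t 1 * Ω₀ t 2 - z t 2 * Ω₀ t 1)^2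
          + (z t 2 * Ω₀ t 0 - z t 0 * Ω₀ t 2)^2
          + (z t 0 * Ω₀ t 1 - z t 1 * Ω₀ t 0)^2) * q t := by
        rw [hqe]
        simp only [hSdef]
        exact cs3 _ _ _ (ω t 0) (ω t 1) (ω t 2)
      have hlag : (z t 1 * Ω₀ t 2 - z t 2 * Ω₀ t 1)^2 + (z t 2 * Ω₀ t 0 - z t 0 * Ω₀ t 2)^2
          + (z t 0 * Ω₀ t 1 - z t 1 * Ω₀ t 0)^2
          ≤ p t * (Ω₀ t 0^2 + Ω₀ t 1^2 + Ω₀ t 2^2) := by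
        rw [hpe]
        have hid : (z t 0^2 + z t 1^2 + z t 2^2) * (Ω₀ t 0^2 + Ω₀ t 1^2 + Ω₀ t 2^2)
            = (z t 1 * Ω₀ t 2 - z t 2 * Ω₀ t 1)^2 + (z t 2 * Ω₀ t 0 - z t 0 * Ω₀ t 2)^2
              + (z t 0 * Ω₀ t 1 - z t 1 * Ω₀ t 0)^2
              + (z t 0 * Ω₀ t 0 + z t 1 * Ω₀ t 1 + z t 2 * Ω₀ t 2)^2 := by ring
        linarith [sq_nonneg (z t 0 * Ω₀ t 0 + z t 1 * Ω₀ t 1 + z t 2 * Ω₀ t 2)]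
      have hstep : ((z t 1 * Ω₀ t 2 - z t 2 * Ω₀ t 1)^2 + (z t 2 * Ω₀ t 0 - z t 0 * Ω₀ t 2)^2
          + (z t 0 * Ω₀ t 1 - z t 1 * Ω₀ t 0)^2) * q t
          ≤ (p t * (Ω₀ t 0^2 + Ω₀ t 1^2 + Ω₀ t 2^2)) * q t :=
        mul_le_mul_of_nonneg_right hlag (hqnn t)
      have hstep2 : (p t * (Ω₀ t 0^2 + Ω₀ t 1^2 + Ω₀ t 2^2)) * q t ≤ (p t * M^2) * q t :=
        mul_le_mul_of_nonneg_right (mul_le_mul_of_nonneg_left hΩsq (hpnn t)) (hqnn t)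
      have htgt : (kP * p t / 2) * (2 * M^2 * q t / kP) = (p t * M^2) * q t := by
        field_simp
      rw [htgt]
      linarith
    have hSle : Sf t ≤ (kP * p t / 2 + 2*M^2*q t/kP)/2 :=
      key1 _ _ _ (div_nonneg (mul_nonneg hkP.le (hpnn t)) (by norm_num))
        (div_nonneg (mul_nonneg (by positivity) (hqnn t)) hkP.le) hS2
    -- bound on Tf
    have hT2 : (-(Tf t))^2 ≤ (kP * p t / 2) * (2 * L2 * q t / kP) := by
      have hA : ∀ i : Fin 3, ((KD *ᵥ ω t) i)^2 ≤ (KD i 0^2 + KD i 1^2 + KD i 2^2) * q t := by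
        intro i
        rw [hmulVec t i, hqe]
        exact cs3 (KD i 0) (KD i 1) (KD i 2) (ω t 0) (ω t 1) (ω t 2)
      have hcs : (Tf t)^2 ≤ p t * (((KD *ᵥ ω t) 0)^2 + ((KD *ᵥ ω t) 1)^2
          + ((KD *ᵥ ω t) 2)^2) := by
        rw [hpe]
        simp only [hTdef]
        exact cs3 (z t 0) (z t 1) (z t 2) _ _ _
      have hsum : ((KD *ᵥ ω t) 0)^2 + ((KD *ᵥ ω t) 1)^2 + ((KD *ᵥ ω t) 2)^2 ≤ L2 * q t := by
        rw [hL2e]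
        have h0 := hA 0; have h1 := hA 1; have h2 := hA 2
        have hid : (KD 0 0^2 + KD 0 1^2 + KD 0 2^2 + (KD 1 0^2 + KD 1 1^2 + KD 1 2^2)
            + (KD 2 0^2 + KD 2 1^2 + KD 2 2^2)) * q t
            = (KD 0 0^2 + KD 0 1^2 + KD 0 2^2) * q t + (KD 1 0^2 + KD 1 1^2 + KD 1 2^2) * q t
              + (KD 2 0^2 + KD 2 1^2 + KD 2 2^2) * q t := by ring
        linarith [h0, h1, h2]
      have hstep : p t * (((KD *ᵥ ω t) 0)^2 + ((KD *ᵥ ω t) 1)^2 + ((KD *ᵥ ω t) 2)^2)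
          ≤ p t * (L2 * q t) := mul_le_mul_of_nonneg_left hsum (hpnn t)
      have htgt : (kP * p t / 2) * (2 * L2 * q t / kP) = p t * (L2 * q t) := by
        field_simp
      rw [htgt, neg_sq]
      linarith
    have hTle : -(Tf t) ≤ (kP * p t / 2 + 2*L2*q t/kP)/2 :=
      key1 _ _ _ (div_nonneg (mul_nonneg hkP.le (hpnn t)) (by norm_num))
        (div_nonneg (mul_nonneg (mul_nonneg (by norm_num) hL2nn) (hqnn t)) hkP.le) hT2
    -- Q bound
    have hQge : m * q t ≤ Q t := by
      have h := hmlow (ω t)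
      simp only [Fin.sum_univ_three] at h
      simp only [hQdef, hqdef]
      linarith
    -- assemble
    have hεS : ε * Sf t ≤ ε * ((kP * p t / 2 + 2*M^2*q t/kP)/2) :=
      mul_le_mul_of_nonneg_left hSle hεpos.le
    have hεT : ε * (-(Tf t)) ≤ ε * ((kP * p t / 2 + 2*L2*q t/kP)/2) :=
      mul_le_mul_of_nonneg_left hTle hεpos.le
    have hεq : ε * (1 + (M^2 + L2)/kP) * q t ≤ m * q t := by
      have := mul_le_mul_of_nonneg_right hεD (hqnn t)
      rw [hDdef] at this
      linarith
    have hV'e : V' t = -2*Q t + ε * Sf t + ε * q t - ε * kP * p t + ε * (-(Tf t)) := by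
      simp only [hV'def]; ring
    have hstep1 : V' t ≤ -(m * q t) - ε * kP / 2 * p t := by
      rw [hV'e]
      have hkP' : kP ≠ 0 := ne_of_gt hkP
      have hexp1 : ε * ((kP * p t / 2 + 2*M^2*q t/kP)/2)
          = ε * kP * p t / 4 + ε * M^2 * q t / kP := by field_simp; ring
      have hexp2 : ε * ((kP * p t / 2 + 2*L2*q t/kP)/2)
          = ε * kP * p t / 4 + ε * L2 * q t / kP := by field_simp; ring
      have hexp3 : ε * (1 + (M^2 + L2)/kP) * q t
          = ε * q t + ε * M^2 * q t / kP + ε * L2 * q t / kP := by field_simp; ring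
      rw [hexp1] at hεS
      rw [hexp2] at hεT
      rw [hexp3] at hεq
      linarith [hQge]
    have h4 : lam1 * V t ≤ c * (p t + q t) := by
      have h := mul_le_mul_of_nonneg_left (hVup t) hlam1pos.le
      calc lam1 * V t ≤ lam1 * (c2 * (p t + q t)) := h
        _ = (lam1 * c2) * (p t + q t) := by ring
        _ = c * (p t + q t) := by rw [hkeyc]
    have hcq : c * q t ≤ m * q t := mul_le_mul_of_nonneg_right hcle2 (hqnn t)
    have hcp : c * p t ≤ ε*kP/2 * p t := mul_le_mul_of_nonneg_right hcle1 (hpnn t)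
    linarith [hstep1, h4, hcq, hcp]
  have hVdecay := gronwall V V' lam1 hVd hle
  -- final combination
  intro t ht
  have hE : (0:ℝ) < Real.exp (-lam1 * t) := Real.exp_pos _
  have hpq : p t + q t ≤ (c2/c1) * ((p 0 + q 0) * Real.exp (-lam1 * t)) := by
    have h1 := hVlow t
    have h2 := hVdecay t ht
    have h3 := hVup 0
    have h4 : V 0 * Real.exp (-lam1 * t) ≤ (c2 * (p 0 + q 0)) * Real.exp (-lam1 * t) :=
      mul_le_mul_of_nonneg_right h3 hE.le
    have h5 : c1 * (p t + q t) ≤ c2 * (p 0 + q 0) * Real.exp (-lam1 * t) := by linarith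
    have h6 : p t + q t ≤ (c2 * (p 0 + q 0) * Real.exp (-lam1 * t))/c1 := by
      rw [le_div_iff₀ hc1pos]
      linarith
    calc p t + q t ≤ (c2 * (p 0 + q 0) * Real.exp (-lam1 * t))/c1 := h6
      _ = (c2/c1) * ((p 0 + q 0) * Real.exp (-lam1 * t)) := by ring
  have henz : ∀ s, enorm3 (z s) = Real.sqrt (p s) := fun s => by
    simp [enorm3, Fin.sum_univ_three, hpdef]
  have henω : ∀ s, enorm3 (ω s) = Real.sqrt (q s) := fun s => by
    simp [enorm3, Fin.sum_univ_three, hqdef]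
  have hzω : enorm3 (z t) + enorm3 (ω t) ≤
      K * Real.exp (-(lam1/2) * t) * (enorm3 (z 0) + enorm3 (ω 0)) := by
    rw [henz, henω, henz, henω]
    have step1 : Real.sqrt (p t) + Real.sqrt (q t) ≤ Real.sqrt (2*(p t + q t)) :=
      sqrt_sum_le _ _ (hpnn t) (hqnn t)
    have step2 : Real.sqrt (2*(p t + q t)) ≤
        Real.sqrt ((2*c2/c1) * ((p 0 + q 0) * Real.exp (-lam1 * t))) := by
      apply Real.sqrt_le_sqrt
      calc 2 * (p t + q t) ≤ 2 * ((c2/c1) * ((p 0 + q 0) * Real.exp (-lam1 * t))) := by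
            linarith
        _ = (2*c2/c1) * ((p 0 + q 0) * Real.exp (-lam1 * t)) := by ring
    have step3 : Real.sqrt ((2*c2/c1) * ((p 0 + q 0) * Real.exp (-lam1 * t)))
        = K * (Real.sqrt (p 0 + q 0) * Real.exp (-(lam1/2) * t)) := by
      rw [Real.sqrt_mul (by positivity), Real.sqrt_mul (add_nonneg (hpnn 0) (hqnn 0)),
        ← Real.exp_half, show (-lam1 * t)/2 = -(lam1/2) * t by ring, hKdef]
    have step4 : Real.sqrt (p 0 + q 0) ≤ Real.sqrt (p 0) + Real.sqrt (q 0) :=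
      sqrt_add_le' _ _ (hpnn 0) (hqnn 0)
    have hexp2 : (0:ℝ) < Real.exp (-(lam1/2) * t) := Real.exp_pos _
    calc Real.sqrt (p t) + Real.sqrt (q t) ≤
        K * (Real.sqrt (p 0 + q 0) * Real.exp (-(lam1/2) * t)) := by
          rw [← step3]; exact le_trans step1 step2
      _ ≤ K * ((Real.sqrt (p 0) + Real.sqrt (q 0)) * Real.exp (-(lam1/2) * t)) := by
          apply mul_le_mul_of_nonneg_left _ hKnn
          exact mul_le_mul_of_nonneg_right step4 hexp2.le
      _ = K * Real.exp (-(lam1/2) * t) * (Real.sqrt (p 0) + Real.sqrt (q 0)) := by ring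
  -- combine A and B
  have hZb := hZbound t ht
  have hexpZ : Real.exp (-(2*ke)*t) ≤ Real.exp (-lam*t) := by
    apply Real.exp_le_exp.mpr
    have h := mul_le_mul_of_nonneg_right hlam2ke ht
    linarith
  have hexpB : Real.exp (-(lam1/2)*t) ≤ Real.exp (-lam*t) := by
    apply Real.exp_le_exp.mpr
    have h := mul_le_mul_of_nonneg_right hlamlam1 ht
    linarith
  have hZ0nn : 0 ≤ ‖Zs 0‖ := norm_nonneg _
  have hz0nn : 0 ≤ enorm3 (z 0) := Real.sqrt_nonneg _
  have hω0nn : 0 ≤ enorm3 (ω 0) := Real.sqrt_nonneg _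
  have hEt : (0:ℝ) < Real.exp (-lam*t) := Real.exp_pos _
  have hfin1 : ‖Zs t‖ ≤ Real.exp (-lam*t) * ‖Zs 0‖ :=
    le_trans hZb (mul_le_mul_of_nonneg_right hexpZ hZ0nn)
  have hfin2 : enorm3 (z t) + enorm3 (ω t) ≤
      K * Real.exp (-lam*t) * (enorm3 (z 0) + enorm3 (ω 0)) := by
    refine le_trans hzω ?_
    have h : K * Real.exp (-(lam1/2)*t) ≤ K * Real.exp (-lam*t) :=
      mul_le_mul_of_nonneg_left hexpB hKnn
    exact mul_le_mul_of_nonneg_right h (by linarith)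
  have hpr1 : 0 ≤ K * Real.exp (-lam*t) * ‖Zs 0‖ :=
    mul_nonneg (mul_nonneg hKnn hEt.le) hZ0nn
  have hpr2 : 0 ≤ Real.exp (-lam*t) * (enorm3 (z 0) + enorm3 (ω 0)) :=
    mul_nonneg hEt.le (add_nonneg hz0nn hω0nn)
  have hid : (1 + K) * Real.exp (-lam*t) * (‖Zs 0‖ + enorm3 (z 0) + enorm3 (ω 0))
      = Real.exp (-lam*t) * ‖Zs 0‖ + K * Real.exp (-lam*t) * (enorm3 (z 0) + enorm3 (ω 0))
        + (K * Real.exp (-lam*t) * ‖Zs 0‖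
            + Real.exp (-lam*t) * (enorm3 (z 0) + enorm3 (ω 0))) := by ring
  linarith [hfin1, hfin2, hpr1, hpr2]

end
end
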